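/- arXiv:1612.01700 — 5 statements merged into one kernel-verified Lean document; each statement's English description precedes it below -/
import Mathlib

section
/- Let N ≥ 2, let Ω ⊂ ℝ^N be a bounded open set, let H : Ω × ℝ^N → ℝ be continuous and satisfy (SC1) with constant b, and let f : Ω → ℝ be continuous and bounded. Suppose u : cl(Ω) → ℝ is a bounded upper semicontinuous viscosity subsolution of 𝒫⁻₁(D²u) + H(x,∇u) = f(x) in Ω with u = 0 on ∂Ω, and suppose there is a constant C₀ > 0 such that −u(x) ≤ C₀ d(x) for all x ∈ cl(Ω). Then u is Lipschitz continuous on cl(Ω), with Lipschitz constant bounded by a constant depending only on b, C₀, sup|u| and sup|f|. -/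
open Metric Filter Topology Set

/-- `𝒫⁻ₖ(D²φ(x))`: the sum of the `k` smallest eigenvalues of the Hessian of `φ` at `x`,
expressed through the min-max representation over orthonormal `k`-frames. -/
noncomputable def Pminus {N : ℕ} (k : ℕ) (φ : EuclideanSpace ℝ (Fin N) → ℝ)
    (x : EuclideanSpace ℝ (Fin N)) : ℝ :=
  sInf {s : ℝ | ∃ ξ : Fin k → EuclideanSpace ℝ (Fin N), Orthonormal ℝ ξ ∧
    s = ∑ i, iteratedFDeriv ℝ 2 φ x ![ξ i, ξ i]}

/-- `𝒫⁺ₖ(D²φ(x))`: the sum of the `k` largest eigenvalues of the Hessian of `φ` at `x`. -/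
noncomputable def Pplus {N : ℕ} (k : ℕ) (φ : EuclideanSpace ℝ (Fin N) → ℝ)
    (x : EuclideanSpace ℝ (Fin N)) : ℝ :=
  sSup {s : ℝ | ∃ ξ : Fin k → EuclideanSpace ℝ (Fin N), Orthonormal ℝ ξ ∧
    s = ∑ i, iteratedFDeriv ℝ 2 φ x ![ξ i, ξ i]}

/-- Viscosity subsolution of `P(D²u) + H(x,∇u) + μ u = f(x)` in `Ω`:
for every `x₀ ∈ Ω` and every `C²` test function `φ` such that `u - φ` has a local
maximum (relative to `Ω`) at `x₀`, one has `P(D²φ(x₀)) + H(x₀,∇φ(x₀)) + μ u(x₀) ≥ f(x₀)`. -/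
def IsViscSubsol {N : ℕ}
    (P : (EuclideanSpace ℝ (Fin N) → ℝ) → EuclideanSpace ℝ (Fin N) → ℝ)
    (Ω : Set (EuclideanSpace ℝ (Fin N)))
    (H : EuclideanSpace ℝ (Fin N) → EuclideanSpace ℝ (Fin N) → ℝ)
    (μ : ℝ) (f : EuclideanSpace ℝ (Fin N) → ℝ)
    (u : EuclideanSpace ℝ (Fin N) → ℝ) : Prop :=
  ∀ x₀ ∈ Ω, ∀ φ : EuclideanSpace ℝ (Fin N) → ℝ, ContDiffAt ℝ 2 φ x₀ →
    IsLocalMaxOn (fun x => u x - φ x) Ω x₀ →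
    f x₀ ≤ P φ x₀ + H x₀ (gradient φ x₀) + μ * u x₀

/-- Viscosity supersolution of `P(D²u) + H(x,∇u) + μ u = f(x)` in `Ω`. -/
def IsViscSupersol {N : ℕ}
    (P : (EuclideanSpace ℝ (Fin N) → ℝ) → EuclideanSpace ℝ (Fin N) → ℝ)
    (Ω : Set (EuclideanSpace ℝ (Fin N)))
    (H : EuclideanSpace ℝ (Fin N) → EuclideanSpace ℝ (Fin N) → ℝ)
    (μ : ℝ) (f : EuclideanSpace ℝ (Fin N) → ℝ)
    (u : EuclideanSpace ℝ (Fin N) → ℝ) : Prop :=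
  ∀ x₀ ∈ Ω, ∀ φ : EuclideanSpace ℝ (Fin N) → ℝ, ContDiffAt ℝ 2 φ x₀ →
    IsLocalMinOn (fun x => u x - φ x) Ω x₀ →
    P φ x₀ + H x₀ (gradient φ x₀) + μ * u x₀ ≤ f x₀

/-- Structure condition (SC1): `|H(x,ξ)| ≤ b‖ξ‖`. -/
def SC1 {N : ℕ} (Ω : Set (EuclideanSpace ℝ (Fin N)))
    (H : EuclideanSpace ℝ (Fin N) → EuclideanSpace ℝ (Fin N) → ℝ) (b : ℝ) : Prop :=
  ∀ x ∈ Ω, ∀ ξ : EuclideanSpace ℝ (Fin N), |H x ξ| ≤ b * ‖ξ‖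

/-- Structure condition (SC2): positive 1-homogeneity in the gradient variable. -/
def SC2 {N : ℕ} (Ω : Set (EuclideanSpace ℝ (Fin N)))
    (H : EuclideanSpace ℝ (Fin N) → EuclideanSpace ℝ (Fin N) → ℝ) : Prop :=
  ∀ x ∈ Ω, ∀ t : ℝ, 0 ≤ t → ∀ ξ : EuclideanSpace ℝ (Fin N), H x (t • ξ) = t * H x ξ

/-- Structure condition (SC3): uniform continuity in `x` through a modulus of continuity. -/
def SC3 {N : ℕ} (Ω : Set (EuclideanSpace ℝ (Fin N)))
    (H : EuclideanSpace ℝ (Fin N) → EuclideanSpace ℝ (Fin N) → ℝ) : Prop :=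
  ∃ ω : ℝ → ℝ, Monotone ω ∧ Filter.Tendsto ω (𝓝[>] (0 : ℝ)) (𝓝 (0 : ℝ)) ∧
    ∀ x ∈ Ω, ∀ y ∈ Ω, ∀ ξ : EuclideanSpace ℝ (Fin N),
      |H x ξ - H y ξ| ≤ ω (‖x - y‖ * (1 + ‖ξ‖))

/-- `Ω ∈ 𝒞_R`: a "hula hoop" domain, i.e. an intersection of a nonempty family of
open balls of the common radius `R`. -/
def HulaHoop {N : ℕ} (R : ℝ) (Ω : Set (EuclideanSpace ℝ (Fin N))) : Prop :=
  ∃ Y : Set (EuclideanSpace ℝ (Fin N)), Y.Nonempty ∧ Ω = ⋂ y ∈ Y, ball y R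

/-- `μ̄ₖ⁻(Ω)`: the supremum (in `EReal`) of those `μ` for which there is an upper
semicontinuous `w < 0` on `cl(Ω)` which is a viscosity subsolution of
`𝒫⁻ₖ(D²w) + H(x,∇w) + μ w = 0` in `Ω`. -/
noncomputable def muBarMinus {N : ℕ} (k : ℕ) (Ω : Set (EuclideanSpace ℝ (Fin N)))
    (H : EuclideanSpace ℝ (Fin N) → EuclideanSpace ℝ (Fin N) → ℝ) : EReal :=
  sSup {m : EReal | ∃ μ : ℝ, m = (μ : EReal) ∧ ∃ w : EuclideanSpace ℝ (Fin N) → ℝ,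
    UpperSemicontinuousOn w (closure Ω) ∧ (∀ x ∈ closure Ω, w x < 0) ∧
    IsViscSubsol (Pminus k) Ω H μ (fun _ => 0) w}

/-- `μₖ⁻(Ω)`: as `μ̄ₖ⁻(Ω)`, but only requiring `w < 0` (and upper semicontinuous) in `Ω`. -/
noncomputable def muMinus {N : ℕ} (k : ℕ) (Ω : Set (EuclideanSpace ℝ (Fin N)))
    (H : EuclideanSpace ℝ (Fin N) → EuclideanSpace ℝ (Fin N) → ℝ) : EReal :=
  sSup {m : EReal | ∃ μ : ℝ, m = (μ : EReal) ∧ ∃ w : EuclideanSpace ℝ (Fin N) → ℝ,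
    UpperSemicontinuousOn w Ω ∧ (∀ x ∈ Ω, w x < 0) ∧
    IsViscSubsol (Pminus k) Ω H μ (fun _ => 0) w}

/-- `μ̄ₖ⁺(Ω)`: the supremum (in `EReal`) of those `μ` for which there is a lower
semicontinuous `w > 0` on `cl(Ω)` which is a viscosity supersolution of
`𝒫⁻ₖ(D²w) + H(x,∇w) + μ w = 0` in `Ω`. -/
noncomputable def muBarPlus {N : ℕ} (k : ℕ) (Ω : Set (EuclideanSpace ℝ (Fin N)))
    (H : EuclideanSpace ℝ (Fin N) → EuclideanSpace ℝ (Fin N) → ℝ) : EReal :=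
  sSup {m : EReal | ∃ μ : ℝ, m = (μ : EReal) ∧ ∃ w : EuclideanSpace ℝ (Fin N) → ℝ,
    LowerSemicontinuousOn w (closure Ω) ∧ (∀ x ∈ closure Ω, 0 < w x) ∧
    IsViscSupersol (Pminus k) Ω H μ (fun _ => 0) w}

/-- `μₖ⁺(Ω)`: as `μ̄ₖ⁺(Ω)`, but only requiring `w > 0` (and lower semicontinuous) in `Ω`. -/
noncomputable def muPlus {N : ℕ} (k : ℕ) (Ω : Set (EuclideanSpace ℝ (Fin N)))
    (H : EuclideanSpace ℝ (Fin N) → EuclideanSpace ℝ (Fin N) → ℝ) : EReal :=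
  sSup {m : EReal | ∃ μ : ℝ, m = (μ : EReal) ∧ ∃ w : EuclideanSpace ℝ (Fin N) → ℝ,
    LowerSemicontinuousOn w Ω ∧ (∀ x ∈ Ω, 0 < w x) ∧
    IsViscSupersol (Pminus k) Ω H μ (fun _ => 0) w}

open scoped RealInnerProductSpace

section Aux

noncomputable def Gf (A c : ℝ) : ℝ → ℝ := fun s => A/c * (1 - Real.exp (-(c * Real.sqrt s)))
noncomputable def Gf1 (A c : ℝ) : ℝ → ℝ := fun s => A / (2 * Real.sqrt s) * Real.exp (-(c * Real.sqrt s))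
noncomputable def Gf2 (A c : ℝ) : ℝ → ℝ := fun s =>
  -(A / (4 * Real.sqrt s * s) + A * c / (4 * s)) * Real.exp (-(c * Real.sqrt s))

variable {E : Type*} [NormedAddCommGroup E] [InnerProductSpace ℝ E] [CompleteSpace E]

lemma hasFDerivAt_qf (y x : E) :
    HasFDerivAt (fun z : E => ⟪z - y, z - y⟫) ((2:ℝ) • innerSL ℝ (x - y)) x := by
  have hid : HasFDerivAt (fun z : E => z - y) (ContinuousLinearMap.id ℝ E) x :=
    (hasFDerivAt_id x).sub_const y
  have h := hid.inner ℝ hid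
  refine h.congr_fderiv ?_
  ext v
  simp [fderivInnerCLM_apply, two_smul, inner_sub_left, inner_sub_right]
  rw [real_inner_comm v x, real_inner_comm v y]

lemma sqrt_pos'' {s : ℝ} (hs : 0 < s) : 0 < Real.sqrt s := Real.sqrt_pos.mpr hs

lemma hasDerivAt_Gf (A : ℝ) {c : ℝ} (hc : 0 < c) {s : ℝ} (hs : 0 < s) :
    HasDerivAt (Gf A c) (Gf1 A c s) s := by
  have hsq := Real.hasDerivAt_sqrt hs.ne'
  have h1 : HasDerivAt (fun t => -(c * Real.sqrt t)) (-(c * (1/(2 * Real.sqrt s)))) s :=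
    (hsq.const_mul c).neg
  have h2 : HasDerivAt (fun t => Real.exp (-(c * Real.sqrt t)))
      (Real.exp (-(c * Real.sqrt s)) * (-(c * (1/(2 * Real.sqrt s))))) s :=
    (Real.hasDerivAt_exp _).comp s h1
  have h3 : HasDerivAt (Gf A c)
      (A/c * (0 - Real.exp (-(c * Real.sqrt s)) * (-(c * (1/(2 * Real.sqrt s)))))) s :=
    ((hasDerivAt_const s (1:ℝ)).sub h2).const_mul (A/c)
  convert h3 using 1
  have h4 : Real.sqrt s ≠ 0 := (sqrt_pos'' hs).ne'
  simp only [Gf1]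
  field_simp
  ring

lemma hasDerivAt_Gf1 (A : ℝ) {c : ℝ} (hc : 0 < c) {s : ℝ} (hs : 0 < s) :
    HasDerivAt (Gf1 A c) (Gf2 A c s) s := by
  have hsq := Real.hasDerivAt_sqrt hs.ne'
  have h4 : Real.sqrt s ≠ 0 := (sqrt_pos'' hs).ne'
  have h1 : HasDerivAt (fun t => -(c * Real.sqrt t)) (-(c * (1/(2 * Real.sqrt s)))) s :=
    (hsq.const_mul c).neg
  have h2 : HasDerivAt (fun t => Real.exp (-(c * Real.sqrt t)))
      (Real.exp (-(c * Real.sqrt s)) * (-(c * (1/(2 * Real.sqrt s))))) s :=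
    (Real.hasDerivAt_exp _).comp s h1
  have h5 : (2 * Real.sqrt s) ≠ 0 := by positivity
  have h3 : HasDerivAt (fun t => A / (2 * Real.sqrt t))
      (-(A * (2 * (1/(2 * Real.sqrt s)))) / (2 * Real.sqrt s)^2) s := by
    have := (hasDerivAt_const s A).div (hsq.const_mul 2) h5
    exact this.congr_deriv (by ring)
  have h6 := h3.mul h2
  refine h6.congr_deriv ?_
  simp only [Gf1, Gf2]
  set ρ := Real.sqrt s with hρdef
  have hss : ρ * ρ = s := Real.mul_self_sqrt hs.le
  have hρpos : 0 < ρ := sqrt_pos'' hs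
  clear_value ρ
  rw [← hss]
  have hρ0 : ρ ≠ 0 := hρpos.ne'
  field_simp
  ring

lemma Gf_comb (A : ℝ) {c : ℝ} (hc : 0 < c) {s : ℝ} (hs : 0 < s) :
    4 * s * Gf2 A c s + 2 * Gf1 A c s = -(c * A * Real.exp (-(c * Real.sqrt s))) := by
  simp only [Gf1, Gf2]
  set ρ := Real.sqrt s with hρdef
  have hss : ρ * ρ = s := Real.mul_self_sqrt hs.le
  have hρpos : 0 < ρ := sqrt_pos'' hs
  clear_value ρ
  rw [← hss]
  have hρ0 : ρ ≠ 0 := hρpos.ne'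
  field_simp
  ring

lemma hasFDerivAt_phi (A : ℝ) {c : ℝ} (hc : 0 < c) (y : E) {x : E} (hxy : x ≠ y) :
    HasFDerivAt (fun z : E => Gf A c ⟪z - y, z - y⟫)
      ((2 * Gf1 A c ⟪x - y, x - y⟫) • innerSL ℝ (x - y)) x := by
  have hspos : (0:ℝ) < ⟪x - y, x - y⟫ := by
    rw [real_inner_self_eq_norm_sq]
    have h0 : x - y ≠ 0 := sub_ne_zero.mpr hxy
    have h1 : ‖x - y‖ ≠ 0 := norm_ne_zero_iff.mpr h0
    positivity
  have h := (hasDerivAt_Gf A hc hspos).comp_hasFDerivAt x (hasFDerivAt_qf y x)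
  exact h.congr_fderiv (by rw [mul_comm, mul_smul])

lemma contDiffAt_phi (A : ℝ) {c : ℝ} (hc : 0 < c) (y : E) {x : E} (hxy : x ≠ y) :
    ContDiffAt ℝ 2 (fun z : E => Gf A c ⟪z - y, z - y⟫) x := by
  have hspos : (0:ℝ) < ⟪x - y, x - y⟫ := by
    rw [real_inner_self_eq_norm_sq]
    have h0 : x - y ≠ 0 := sub_ne_zero.mpr hxy
    have h1 : ‖x - y‖ ≠ 0 := norm_ne_zero_iff.mpr h0
    positivity
  have hq : ContDiffAt ℝ 2 (fun z : E => ⟪z - y, z - y⟫) x :=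
    (ContDiff.inner ℝ (contDiff_id.sub contDiff_const)
      (contDiff_id.sub contDiff_const)).contDiffAt
  have hsqrt : ContDiffAt ℝ 2 Real.sqrt (⟪x - y, x - y⟫) := Real.contDiffAt_sqrt hspos.ne'
  have hG : ContDiffAt ℝ 2 (Gf A c) (⟪x - y, x - y⟫) := by
    unfold Gf
    exact contDiffAt_const.mul (contDiffAt_const.sub
      ((Real.contDiff_exp.contDiffAt).comp _ ((contDiffAt_const.mul hsqrt).neg)))
  exact ContDiffAt.comp (g := Gf A c) (f := fun z : E => ⟪z - y, z - y⟫) x hG hq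

lemma grad_phi (A : ℝ) {c : ℝ} (hc : 0 < c) {A' : ℝ} (hA : 0 ≤ A) (y : E) {x : E} (hxy : x ≠ y) :
    ‖gradient (fun z : E => Gf A c ⟪z - y, z - y⟫) x‖ = A * Real.exp (-(c * ‖x - y‖)) := by
  have h0 : x - y ≠ 0 := sub_ne_zero.mpr hxy
  have hr : (0:ℝ) < ‖x - y‖ := norm_pos_iff.mpr h0
  have hs : ⟪x - y, x - y⟫ = ‖x - y‖^2 := real_inner_self_eq_norm_sq _
  have hd := hasFDerivAt_phi A hc y hxy
  have hg := hd.hasGradientAt.gradient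
  rw [hg, LinearIsometryEquiv.norm_map, norm_smul, innerSL_apply_norm]
  have hsqrt : Real.sqrt (⟪x - y, x - y⟫) = ‖x - y‖ := by
    rw [hs]; exact Real.sqrt_sq hr.le
  simp only [Gf1, hsqrt]
  rw [Real.norm_eq_abs, abs_of_nonneg (by positivity)]
  field_simp

lemma hessian_phi (A : ℝ) {c : ℝ} (hc : 0 < c) (y : E) {x : E} (hxy : x ≠ y) :
    iteratedFDeriv ℝ 2 (fun z : E => Gf A c ⟪z - y, z - y⟫) x
      ![(‖x - y‖)⁻¹ • (x - y), (‖x - y‖)⁻¹ • (x - y)]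
      = -(c * A * Real.exp (-(c * ‖x - y‖))) := by
  have h0 : x - y ≠ 0 := sub_ne_zero.mpr hxy
  have hr : (0:ℝ) < ‖x - y‖ := norm_pos_iff.mpr h0
  have hs : ⟪x - y, x - y⟫ = ‖x - y‖^2 := real_inner_self_eq_norm_sq _
  have hspos : (0:ℝ) < ⟪x - y, x - y⟫ := by rw [hs]; positivity
  have hsqrt : Real.sqrt (⟪x - y, x - y⟫) = ‖x - y‖ := by
    rw [hs]; exact Real.sqrt_sq hr.le
  set F : E → (E →L[ℝ] ℝ) :=
    fun z => (2 * Gf1 A c ⟪z - y, z - y⟫) • innerSL ℝ (z - y) with hF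
  -- the first derivative of φ agrees with F near x
  have hev : fderiv ℝ (fun z : E => Gf A c ⟪z - y, z - y⟫) =ᶠ[𝓝 x] F := by
    filter_upwards [isOpen_ne.mem_nhds (show x ≠ y from hxy)] with z hz
    exact (hasFDerivAt_phi A hc y hz).fderiv
  -- derivative of F at x
  have hG1q : HasFDerivAt (fun z : E => Gf1 A c ⟪z - y, z - y⟫)
      (Gf2 A c (⟪x - y, x - y⟫) • ((2:ℝ) • innerSL ℝ (x - y))) x :=
    by have h := (hasDerivAt_Gf1 A hc hspos).comp_hasFDerivAt x (hasFDerivAt_qf y x); exact h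
  have hcder : HasFDerivAt (fun z : E => 2 * Gf1 A c ⟪z - y, z - y⟫)
      ((2:ℝ) • (Gf2 A c (⟪x - y, x - y⟫) • ((2:ℝ) • innerSL ℝ (x - y)))) x :=
    hG1q.const_mul 2
  have heq : (fun z : E => innerSL ℝ (z - y)) = fun z : E => innerSL ℝ z - innerSL ℝ y := by
    funext z; exact map_sub _ _ _
  have hlin := ((innerSL ℝ (E := E)).hasFDerivAt (x := x)).sub_const (innerSL ℝ y)
  rw [← heq] at hlin
  have hF' := hcder.smul hlin
  rw [iteratedFDeriv_two_apply, hev.fderiv_eq, (show F = ((fun z : E => 2 * Gf1 A c ⟪z - y, z - y⟫) • fun z : E => innerSL ℝ (z - y)) from rfl), hF'.fderiv]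
  simp only [Matrix.cons_val_zero, Matrix.cons_val_one, Matrix.head_cons,
    ContinuousLinearMap.add_apply, ContinuousLinearMap.smul_apply,
    ContinuousLinearMap.smulRight_apply, innerSL_apply_apply, smul_eq_mul,
    real_inner_smul_right, real_inner_smul_left, map_smul]
  erw [innerSL_apply_apply]
  rw [hs]
  have key := Gf_comb A hc hspos
  rw [hsqrt, hs] at key
  set r := ‖x - y‖
  set g1 := Gf1 A c (r^2)
  set g2 := Gf2 A c (r^2)
  have hr0 : r ≠ 0 := hr.ne'
  field_simp at key ⊢
  nlinarith [key, sq_nonneg r]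

lemma Gf_sq (A c t : ℝ) (ht : 0 ≤ t) : Gf A c (t^2) = A/c * (1 - Real.exp (-(c*t))) := by
  simp only [Gf, Real.sqrt_sq ht]

lemma Gf_nonneg {A c : ℝ} (hA : 0 ≤ A) (hc : 0 < c) {s : ℝ} (hs : 0 ≤ s) :
    0 ≤ Gf A c s := by
  have h1 : Real.exp (-(c * Real.sqrt s)) ≤ 1 := by
    rw [Real.exp_le_one_iff]
    have := Real.sqrt_nonneg s
    nlinarith
  have : 0 ≤ A / c := by positivity
  simp only [Gf]
  nlinarith

lemma Gf_le_linear {A c : ℝ} (hA : 0 ≤ A) (hc : 0 < c) {t : ℝ} (ht : 0 ≤ t) :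
    Gf A c (t^2) ≤ A * t := by
  rw [Gf_sq A c t ht]
  have h1 : -(c*t) + 1 ≤ Real.exp (-(c*t)) := Real.add_one_le_exp _
  have h2 : (0:ℝ) ≤ A / c := by positivity
  have h3 : 1 - Real.exp (-(c*t)) ≤ c * t := by linarith
  calc A/c * (1 - Real.exp (-(c*t))) ≤ A/c * (c*t) := by nlinarith
    _ = A * t := by field_simp
lemma Gf_ge_linear {A c D : ℝ} (hA : 0 ≤ A) (hc : 0 < c) {t : ℝ} (ht : 0 ≤ t) (htD : t ≤ D) :
    A * Real.exp (-(c*D)) * t ≤ Gf A c (t^2) := by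
  rw [Gf_sq A c t ht]
  have h1 : c*t + 1 ≤ Real.exp (c*t) := Real.add_one_le_exp _
  have hep : 0 < Real.exp (-(c*t)) := Real.exp_pos _
  have h2 : (c*t + 1) * Real.exp (-(c*t)) ≤ 1 := by
    have hme : Real.exp (c*t) * Real.exp (-(c*t)) = 1 := by
      rw [← Real.exp_add]; simp
    nlinarith
  have h3 : c * t * Real.exp (-(c*t)) ≤ 1 - Real.exp (-(c*t)) := by nlinarith
  have h4 : Real.exp (-(c*D)) ≤ Real.exp (-(c*t)) := by
    apply Real.exp_le_exp.mpr
    nlinarith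
  have h5 : c * t * Real.exp (-(c*D)) ≤ 1 - Real.exp (-(c*t)) := by
    have hct : 0 ≤ c * t := by positivity
    nlinarith
  have h6 : (0:ℝ) ≤ A / c := by positivity
  calc A * Real.exp (-(c*D)) * t = A/c * (c * t * Real.exp (-(c*D))) := by field_simp
    _ ≤ A/c * (1 - Real.exp (-(c*t))) := by nlinarith

/-- An upper semicontinuous function bounded above attains its max on a nonempty compact set. -/
lemma usc_exists_max {X : Type*} [MetricSpace X] {K : Set X} (hK : IsCompact K)
    (hne : K.Nonempty) {w : X → ℝ} (hw : UpperSemicontinuousOn w K)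
    (hbdd : BddAbove (w '' K)) : ∃ x ∈ K, ∀ z ∈ K, w z ≤ w x := by
  set m := sSup (w '' K) with hm
  have hne' : (w '' K).Nonempty := hne.image w
  have hseq : ∀ n : ℕ, ∃ x ∈ K, m - 1/(n+1) < w x := by
    intro n
    have hlt : m - 1/(n+1) < m := by
      have : (0:ℝ) < 1/(n+1) := by positivity
      linarith
    obtain ⟨t, ht, hlt'⟩ := exists_lt_of_lt_csSup hne' hlt
    obtain ⟨x, hx, rfl⟩ := ht
    exact ⟨x, hx, hlt'⟩
  choose x hxK hxlt using hseq
  obtain ⟨xb, hxbK, ψ, hψ, hts⟩ := hK.tendsto_subseq hxK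
  refine ⟨xb, hxbK, fun z hz => ?_⟩
  have hzm : w z ≤ m := le_csSup hbdd ⟨z, hz, rfl⟩
  refine hzm.trans ?_
  by_contra hlt
  push_neg at hlt
  set t := (w xb + m)/2 with ht
  have h1 : w xb < t := by simp only [ht]; linarith
  have h2 : t < m := by simp only [ht]; linarith
  have hev : ∀ᶠ n in atTop, w (x (ψ n)) < t := by
    have hW := hw xb hxbK t h1
    have htsW : Tendsto (fun n => x (ψ n)) atTop (𝓝[K] xb) := by
      rw [tendsto_nhdsWithin_iff]
      exact ⟨hts, Eventually.of_forall (fun n => hxK _)⟩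
    exact htsW.eventually hW
  obtain ⟨n₀, hn₀⟩ := exists_nat_one_div_lt (show (0:ℝ) < m - t by linarith)
  have hev2 : ∀ᶠ n in atTop, t < w (x (ψ n)) := by
    filter_upwards [eventually_ge_atTop n₀] with n hn
    have h3 : (1:ℝ)/(ψ n + 1) ≤ 1/(n₀ + 1) := by
      apply one_div_le_one_div_of_le (by positivity)
      have : (n₀ : ℝ) ≤ ψ n := by
        exact_mod_cast le_trans hn (hψ.le_apply)
      linarith
    have := hxlt (ψ n)
    have : m - 1/(n₀+1) < w (x (ψ n)) := by linarith
    linarith [hn₀]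
  obtain ⟨n, h4, h5⟩ := (hev.and hev2).exists
  linarith

lemma Pminus_le_unit {N : ℕ} (φ : EuclideanSpace ℝ (Fin N) → ℝ)
    (x e : EuclideanSpace ℝ (Fin N)) (he : ‖e‖ = 1) :
    Pminus 1 φ x ≤ iteratedFDeriv ℝ 2 φ x ![e, e] := by
  apply csInf_le
  · refine ⟨-‖iteratedFDeriv ℝ 2 φ x‖, ?_⟩
    rintro s ⟨ξ, hξ, rfl⟩
    rw [Fin.sum_univ_one]
    have hb := (iteratedFDeriv ℝ 2 φ x).le_opNorm ![ξ 0, ξ 0]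
    have hprod : (∏ i, ‖(![ξ 0, ξ 0]) i‖) = 1 := by
      rw [Fin.prod_univ_two]
      simp [hξ.1 0]
    rw [hprod, mul_one] at hb
    have h2 := abs_le.mp ((Real.norm_eq_abs _ ▸ hb))
    linarith [h2.1]
  · refine ⟨fun _ => e, ⟨fun i => he, fun i j hij => absurd (Subsingleton.elim i j) hij⟩, ?_⟩
    rw [Fin.sum_univ_one]

end Aux

set_option maxHeartbeats 2000000

/-- global Lipschitz regularity for bounded subsolutions of
`𝒫⁻₁(D²u) + H(x,∇u) = f` vanishing on `∂Ω` and satisfying `-u ≤ C₀ d`. -/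
theorem statement7 {N : ℕ} (hN : 2 ≤ N)
    (Ω : Set (EuclideanSpace ℝ (Fin N))) (hΩopen : IsOpen Ω)
    (hΩbdd : Bornology.IsBounded Ω)
    (H : EuclideanSpace ℝ (Fin N) → EuclideanSpace ℝ (Fin N) → ℝ) (b : ℝ) (hb : 0 ≤ b)
    (hHcont : ContinuousOn (Function.uncurry H)
      (Ω ×ˢ (univ : Set (EuclideanSpace ℝ (Fin N)))))
    (hSC1 : SC1 Ω H b)
    (f : EuclideanSpace ℝ (Fin N) → ℝ)
    (hfc : ContinuousOn f Ω) (hfb : ∃ M : ℝ, ∀ x ∈ Ω, |f x| ≤ M)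
    (u : EuclideanSpace ℝ (Fin N) → ℝ)
    (hubdd : ∃ M : ℝ, ∀ x ∈ closure Ω, |u x| ≤ M)
    (husc : UpperSemicontinuousOn u (closure Ω))
    (hbdry : ∀ x ∈ frontier Ω, u x = 0)
    (C₀ : ℝ) (hC₀ : 0 < C₀)
    (hlow : ∀ x ∈ closure Ω, -u x ≤ C₀ * infDist x (frontier Ω))
    (hsub : IsViscSubsol (Pminus 1) Ω H 0 f u) :
    ∃ L : NNReal, LipschitzOnWith L u (closure Ω) := by
  
  classical
  rcases Set.eq_empty_or_nonempty Ω with hΩe | hΩne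
  · have hce : closure Ω = (∅ : Set (EuclideanSpace ℝ (Fin N))) := by
      rw [hΩe, closure_empty]
    exact ⟨1, by rw [hce]; intro x hx; exact absurd hx (notMem_empty x)⟩
  obtain ⟨M₀, hM₀⟩ := hfb
  obtain ⟨Mu, hMu⟩ := hubdd
  set M := max M₀ 0 with hMdef
  have hM0 : 0 ≤ M := le_max_right _ _
  have hfM : ∀ x ∈ Ω, |f x| ≤ M := fun x hx => (hM₀ x hx).trans (le_max_left _ _)
  obtain ⟨D₀, hD₀⟩ := Metric.isBounded_iff.mp hΩbdd.closure
  set D := max D₀ 1 with hDdef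
  have hD1 : (0:ℝ) < D := lt_of_lt_of_le one_pos (le_max_right _ _)
  have hD : ∀ x ∈ closure Ω, ∀ y ∈ closure Ω, dist x y ≤ D :=
    fun x hx y hy => (hD₀ hx hy).trans (le_max_left _ _)
  set c := b + 1 with hcdef
  have hc : (0:ℝ) < c := by linarith
  set A := (M + C₀ + 1) * Real.exp (c * D) with hAdef
  have hA0 : (0:ℝ) < A := by positivity
  have hAeD : A * Real.exp (-(c * D)) = M + C₀ + 1 := by
    rw [hAdef, mul_assoc, ← Real.exp_add]
    simp
  have hcomp : IsCompact (closure Ω) := hΩbdd.isCompact_closure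
  -- Step 1: cone comparison from interior points
  have key : ∀ y ∈ Ω, ∀ x ∈ closure Ω, u x - u y ≤ A * ‖x - y‖ := by
    intro y hy
    set φ : EuclideanSpace ℝ (Fin N) → ℝ := fun z => Gf A c ⟪z - y, z - y⟫ with hφdef
    have hφcont : Continuous φ := by
      apply Continuous.comp (g := Gf A c)
      · exact continuous_const.mul (continuous_const.sub (Real.continuous_exp.comp
          ((continuous_const.mul Real.continuous_sqrt).neg)))
      · exact (continuous_id.sub continuous_const).inner (continuous_id.sub continuous_const)
    set w : EuclideanSpace ℝ (Fin N) → ℝ := fun z => u z - u y - φ z with hwdef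
    have husc' : UpperSemicontinuousOn w (closure Ω) := by
      have h2 : UpperSemicontinuousOn (fun z => -u y - φ z) (closure Ω) :=
        ((continuous_const.sub hφcont).continuousOn).upperSemicontinuousOn
      have h3 := husc.add h2
      have : (fun z => u z + (-u y - φ z)) = w := by
        funext z; simp [hwdef]; ring
      rwa [this] at h3
    have hynn : y ∈ closure Ω := subset_closure hy
    have hφnn : ∀ z, 0 ≤ φ z := by
      intro z
      exact Gf_nonneg hA0.le hc real_inner_self_nonneg
    have hbddw : BddAbove (w '' closure Ω) := by
      refine ⟨Mu + Mu, ?_⟩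
      rintro t ⟨z, hz, rfl⟩
      have h1 := abs_le.mp (hMu z hz)
      have h2 := abs_le.mp (hMu y hynn)
      have h3 := hφnn z
      simp only [hwdef]
      linarith
    obtain ⟨xb, hxbK, hxbmax⟩ := usc_exists_max hcomp ⟨y, hynn⟩ husc' hbddw
    have hwxb : w xb ≤ 0 := by
      by_cases hxbΩ : xb ∈ Ω
      · by_cases hxy : xb = y
        · subst hxy
          simp only [hwdef, hφdef, Gf, sub_self, inner_zero_left, Real.sqrt_zero, mul_zero,
            neg_zero, Real.exp_zero]
          ring_nf
          simp
        · exfalso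
          have hCD := contDiffAt_phi A hc y hxy
          have hmax : IsLocalMaxOn (fun z => u z - φ z) Ω xb := by
            have hall : ∀ z ∈ Ω, u z - φ z ≤ u xb - φ xb := by
              intro z hz
              have := hxbmax z (subset_closure hz)
              simp only [hwdef] at this
              linarith
            show ∀ᶠ z in 𝓝[Ω] xb, u z - φ z ≤ u xb - φ xb
            filter_upwards [self_mem_nhdsWithin] with z hz using hall z hz
          have hsc := hsub xb hxbΩ φ hCD hmax
          set r := ‖xb - y‖ with hrdef
          have hr : 0 < r := norm_pos_iff.mpr (sub_ne_zero.mpr hxy)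
          have hrD : r ≤ D := by
            have := hD xb hxbK y hynn
            rwa [dist_eq_norm] at this
          have he1 : ‖(‖xb - y‖)⁻¹ • (xb - y)‖ = 1 := by
            rw [norm_smul, norm_inv, norm_norm, inv_mul_cancel₀ hr.ne']
          have hPm : Pminus 1 φ xb ≤ -(c * A * Real.exp (-(c * r))) := by
            have hhess := hessian_phi A hc y hxy
            have hle := Pminus_le_unit φ xb ((‖xb - y‖)⁻¹ • (xb - y)) he1
            rw [hhess] at hle
            exact hle
          have hgrad : ‖gradient φ xb‖ = A * Real.exp (-(c * r)) :=
            grad_phi A hc (A' := A) hA0.le y hxy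
          have hH : H xb (gradient φ xb) ≤ b * (A * Real.exp (-(c * r))) := by
            have h5 := hSC1 xb hxbΩ (gradient φ xb)
            rw [hgrad] at h5
            exact le_trans (le_abs_self _) h5
          have hfl : -M ≤ f xb := (abs_le.mp (hfM xb hxbΩ)).1
          have hexp : Real.exp (-(c * D)) ≤ Real.exp (-(c * r)) := by
            apply Real.exp_le_exp.mpr
            nlinarith
          have hAe : M + C₀ + 1 ≤ A * Real.exp (-(c * r)) := by
            rw [← hAeD]
            nlinarith
          have hcb : c * (A * Real.exp (-(c * r))) - b * (A * Real.exp (-(c * r)))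
              = A * Real.exp (-(c * r)) := by
            rw [hcdef]; ring
          nlinarith [hsc, hPm, hH, hfl, hAe]
      · have hfr : xb ∈ frontier Ω := by
          rw [hΩopen.frontier_eq]
          exact ⟨hxbK, hxbΩ⟩
        have hu0 : u xb = 0 := hbdry xb hfr
        have hdy : infDist y (frontier Ω) ≤ dist y xb := infDist_le_dist_of_mem hfr
        have hlowy := hlow y hynn
        set r := ‖xb - y‖ with hrdef
        have hr0 : 0 ≤ r := norm_nonneg _
        have hrD : r ≤ D := by
          have := hD xb hxbK y hynn
          rwa [dist_eq_norm] at this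
        have hglb := Gf_ge_linear (A := A) (c := c) (D := D) hA0.le hc hr0 hrD
        rw [hAeD] at hglb
        have hφxb : φ xb = Gf A c (r ^ 2) := by
          simp only [hφdef, real_inner_self_eq_norm_sq, hrdef]
        have hdyr : dist y xb = r := by
          rw [dist_eq_norm, norm_sub_rev]
        rw [hdyr] at hdy
        simp only [hwdef, hu0, hφxb]
        nlinarith
    intro x hx
    have h1 := hxbmax x hx
    have h2 : φ x ≤ A * ‖x - y‖ := by
      have h3 := Gf_le_linear hA0.le hc (norm_nonneg (x - y))
      have h4 : φ x = Gf A c (‖x - y‖ ^ 2) := by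
        simp only [hφdef, real_inner_self_eq_norm_sq]
      rw [h4]; exact h3
    simp only [hwdef] at h1 hwxb
    linarith
  -- Step 2: extend to all pairs in the closure
  have key2 : ∀ y ∈ closure Ω, ∀ x ∈ closure Ω, u x - u y ≤ A * dist x y := by
    intro y hy x hx
    by_cases hyΩ : y ∈ Ω
    · have := key y hyΩ x hx
      rwa [dist_eq_norm]
    · have hfr : y ∈ frontier Ω := by
        rw [hΩopen.frontier_eq]; exact ⟨hy, hyΩ⟩
      have hu0 : u y = 0 := hbdry y hfr
      rw [hu0, sub_zero]
      have hcl : ∀ ε > (0:ℝ), u x ≤ A * dist x y + (1 + A) * ε := by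
        intro ε hε
        have hne : (𝓝[Ω] y).NeBot := mem_closure_iff_nhdsWithin_neBot.mp hy
        have ev1 : ∀ᶠ z in 𝓝[closure Ω] y, u z < u y + ε := husc y hy (u y + ε) (by linarith)
        have ev1' : ∀ᶠ z in 𝓝[Ω] y, u z < u y + ε :=
          ev1.filter_mono (nhdsWithin_mono y subset_closure)
        have ev2 : ∀ᶠ z in 𝓝[Ω] y, dist x z < dist x y + ε := by
          apply Filter.Eventually.filter_mono nhdsWithin_le_nhds
          have hcont : Continuous (fun z => dist x z) := continuous_const.dist continuous_id
          have : Set.Iio (dist x y + ε) ∈ 𝓝 (dist x y) := Iio_mem_nhds (by linarith)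
          filter_upwards [hcont.continuousAt.preimage_mem_nhds this] with z hz using hz
        have ev3 : ∀ᶠ z in 𝓝[Ω] y, z ∈ Ω := self_mem_nhdsWithin
        obtain ⟨z, hz1, hz2, hz3⟩ := (ev1'.and (ev2.and ev3)).exists
        have h4 := key z hz3 x hx
        rw [hu0, zero_add] at hz1
        have h5 : ‖x - z‖ = dist x z := (dist_eq_norm x z).symm
        have h6 : dist x z ≤ dist x y + ε := le_of_lt hz2
        nlinarith [hz2, hz1, h4, h5.symm ▸ h4]
      by_contra hcon
      push_neg at hcon
      set δ := (u x - A * dist x y) / (2 * (1 + A)) with hδdef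
      have h1A : (0:ℝ) < 1 + A := by linarith
      have hδpos : 0 < δ := by
        apply div_pos (by linarith) (by linarith)
      have := hcl δ hδpos
      rw [hδdef] at this
      have : u x ≤ A * dist x y + (u x - A * dist x y) / 2 := by
        have hh : (1 + A) * ((u x - A * dist x y) / (2 * (1 + A)))
            = (u x - A * dist x y) / 2 := by
          field_simp
        linarith [hh ▸ this]
      linarith
  refine ⟨⟨A, hA0.le⟩, ?_⟩
  refine lipschitzOnWith_iff_dist_le_mul.mpr ?_
  intro x hx y hy
  rw [Real.dist_eq, abs_sub_le_iff]
  constructor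
  · have := key2 y hy x hx
    exact this
  · have := key2 x hx y hy
    rw [dist_comm] at this
    exact this
end

section
/- Let N ≥ 2, 1 ≤ k < N, let Ω ⊂ ℝ^N be a bounded open set, and let H : Ω × ℝ^N → ℝ be continuous and satisfy (SC2) and (SC3); set b = sup{|H(x,ξ)| : x ∈ Ω, |ξ| ≤ 1}. If Ω contains an open ball of radius R₁ > 0, then μ̄ₖ⁻(Ω) ≤ 2(k + bR₁)(2 + k + bR₁)/R₁². -/
open Metric Filter Topology Set RealInnerProductSpace

lemma aux_inner_deriv {N : ℕ} (c x : EuclideanSpace ℝ (Fin N)) :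
    HasFDerivAt (fun y : EuclideanSpace ℝ (Fin N) => ⟪y - c, y - c⟫)
      ((2 : ℝ) • innerSL ℝ (x - c)) x := by
  have h := ((hasFDerivAt_id x).sub_const c).inner ℝ ((hasFDerivAt_id x).sub_const c)
  refine h.congr_fderiv ?_
  ext v
  simp only [ContinuousLinearMap.smul_apply, innerSL_apply_apply, ContinuousLinearMap.comp_apply,
    ContinuousLinearMap.prod_apply, fderivInnerCLM_apply, ContinuousLinearMap.coe_id', id_eq,
    smul_eq_mul]
  rw [real_inner_comm v (x - c)]
  ring

lemma aux_hasFDerivAt {N : ℕ} (t R : ℝ) (c x : EuclideanSpace ℝ (Fin N)) :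
    HasFDerivAt (fun y => -t * (R ^ 2 - ⟪y - c, y - c⟫) ^ 2)
      ((4 * t * (R ^ 2 - ⟪x - c, x - c⟫)) • innerSL ℝ (x - c)) x := by
  have hs : HasDerivAt (fun s : ℝ => -t * (R ^ 2 - s) ^ 2)
      (2 * t * (R ^ 2 - ⟪x - c, x - c⟫)) (⟪x - c, x - c⟫) := by
    have h := (((hasDerivAt_id (⟪x - c, x - c⟫)).const_sub (R ^ 2)).pow 2).const_mul (-t)
    refine h.congr_deriv ?_
    simp only [id_eq]
    norm_num
    ring
  have h2 := hs.comp_hasFDerivAt x (aux_inner_deriv c x)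
  refine h2.congr_fderiv ?_
  rw [smul_smul]
  congr 1
  ring

lemma aux_contDiff {N : ℕ} (t R : ℝ) (c : EuclideanSpace ℝ (Fin N)) :
    ContDiff ℝ 2 (fun y : EuclideanSpace ℝ (Fin N) => -t * (R ^ 2 - ⟪y - c, y - c⟫) ^ 2) :=
  contDiff_const.mul ((contDiff_const.sub
    (ContDiff.inner ℝ (contDiff_id.sub contDiff_const) (contDiff_id.sub contDiff_const))).pow 2)

lemma aux_fderiv {N : ℕ} (t R : ℝ) (c : EuclideanSpace ℝ (Fin N)) :
    fderiv ℝ (fun y => -t * (R ^ 2 - ⟪y - c, y - c⟫) ^ 2) =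
      fun x => (4 * t * (R ^ 2 - ⟪x - c, x - c⟫)) • innerSL ℝ (x - c) :=
  funext fun x => (aux_hasFDerivAt t R c x).fderiv

lemma aux_gradient {N : ℕ} (t R : ℝ) (c x : EuclideanSpace ℝ (Fin N)) :
    gradient (fun y => -t * (R ^ 2 - ⟪y - c, y - c⟫) ^ 2) x
      = (4 * t * (R ^ 2 - ⟪x - c, x - c⟫)) • (x - c) := by
  apply HasGradientAt.gradient
  rw [hasGradientAt_iff_hasFDerivAt]
  refine (aux_hasFDerivAt t R c x).congr_fderiv ?_
  ext w
  simp [InnerProductSpace.toDual_apply_apply, real_inner_smul_left]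

lemma aux_hessian {N : ℕ} (t R : ℝ) (c x ξ : EuclideanSpace ℝ (Fin N)) :
    iteratedFDeriv ℝ 2 (fun y => -t * (R ^ 2 - ⟪y - c, y - c⟫) ^ 2) x ![ξ, ξ] =
      4 * t * (R ^ 2 - ⟪x - c, x - c⟫) * ⟪ξ, ξ⟫ - 8 * t * ⟪x - c, ξ⟫ ^ 2 := by
  set φ : EuclideanSpace ℝ (Fin N) → ℝ := fun y => -t * (R ^ 2 - ⟪y - c, y - c⟫) ^ 2 with hφ
  have hd1 : DifferentiableAt ℝ (fderiv ℝ φ) x := by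
    have := ((aux_contDiff t R c).fderiv_right (m := 1) le_rfl).differentiable one_ne_zero
    exact this.differentiableAt
  have key : fderiv ℝ (fderiv ℝ φ) x ξ ξ = fderiv ℝ (fun y => fderiv ℝ φ y ξ) x ξ := by
    rw [fderiv_clm_apply hd1 (differentiableAt_const ξ)]
    simp
  have hfun : (fun y => fderiv ℝ φ y ξ) =
      fun y => (4 * t * (R ^ 2 - ⟪y - c, y - c⟫)) * ⟪y - c, ξ⟫ := by
    funext y
    rw [hφ, aux_fderiv]
    simp only [ContinuousLinearMap.smul_apply, innerSL_apply_apply, smul_eq_mul]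
  have ha : HasFDerivAt (fun y : EuclideanSpace ℝ (Fin N) => 4 * t * (R ^ 2 - ⟪y - c, y - c⟫))
      ((4 * t) • (-((2 : ℝ) • innerSL ℝ (x - c)))) x :=
    ((aux_inner_deriv c x).const_sub (R ^ 2)).const_mul (4 * t)
  have hm : HasFDerivAt (fun y : EuclideanSpace ℝ (Fin N) => ⟪y - c, ξ⟫)
      ((fderivInnerCLM ℝ (x - c, ξ)).comp
        ((ContinuousLinearMap.id ℝ (EuclideanSpace ℝ (Fin N))).prod 0)) x := by
    have h := ((hasFDerivAt_id x).sub_const c).inner ℝ (hasFDerivAt_const ξ x)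
    exact h
  have hp := ha.mul hm
  rw [iteratedFDeriv_two_apply]
  simp only [Matrix.cons_val_zero, Matrix.cons_val_one, Matrix.head_cons]
  rw [key, hfun]
  rw [HasFDerivAt.fderiv (f := fun y => 4 * t * (R ^ 2 - ⟪y - c, y - c⟫) * ⟪y - c, ξ⟫) hp]
  simp only [ContinuousLinearMap.add_apply, ContinuousLinearMap.smul_apply,
    ContinuousLinearMap.comp_apply, ContinuousLinearMap.prod_apply, fderivInnerCLM_apply,
    ContinuousLinearMap.coe_id', id_eq, ContinuousLinearMap.neg_apply, innerSL_apply_apply,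
    smul_eq_mul, ContinuousLinearMap.zero_apply, inner_zero_left, inner_zero_right]
  ring

lemma usc_max {X : Type*} [TopologicalSpace X] {s : Set X} (hs : IsCompact s)
    (hne : s.Nonempty) {f : X → ℝ} (hf : UpperSemicontinuousOn f s) :
    ∃ x ∈ s, ∀ y ∈ s, f y ≤ f x := by
  by_contra hcon
  push_neg at hcon
  choose Y hY hfY using hcon
  have hex : ∀ x (hx : x ∈ s), ∃ U ∈ 𝓝 x, U ∩ s ⊆ {z | f z < f (Y x hx)} := by
    intro x hx
    have h2 : {z | f z < f (Y x hx)} ∈ 𝓝[s] x := hf x hx _ (hfY x hx)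
    rwa [mem_nhdsWithin_iff_exists_mem_nhds_inter] at h2
  choose U hU hUsub using hex
  obtain ⟨t, ht⟩ := hs.elim_nhds_subcover' U hU
  obtain ⟨a, ha⟩ := hne
  have htne : t.Nonempty := by
    obtain ⟨i, hit, -⟩ := Set.mem_iUnion₂.1 (ht ha)
    exact ⟨i, hit⟩
  obtain ⟨i, hit, hmax⟩ := t.exists_max_image (fun i => f (Y i.1 i.2)) htne
  have hYs : Y i.1 i.2 ∈ s := hY i.1 i.2
  obtain ⟨j, hjt, hj⟩ := Set.mem_iUnion₂.1 (ht hYs)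
  have h1 : f (Y i.1 i.2) < f (Y j.1 j.2) := hUsub j.1 j.2 ⟨hj, hYs⟩
  have h2 : f (Y j.1 j.2) ≤ f (Y i.1 i.2) := hmax j hjt
  linarith

lemma usc_mul {X : Type*} [TopologicalSpace X] {s : Set X} {w q : X → ℝ}
    (hw : UpperSemicontinuousOn w s)
    (hq : ContinuousOn q s) (hqpos : ∀ x ∈ s, 0 < q x) :
    UpperSemicontinuousOn (fun z => w z * q z) s := by
  intro x hx y hy
  set P := w x with hP
  set Q := q x with hQ
  have hQpos : 0 < Q := hqpos x hx
  set δ : ℝ := (y - P * Q) / (2 * Q) with hδ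
  have hδpos : 0 < δ := by
    apply div_pos _ (by linarith)
    simpa using sub_pos.2 hy
  have hPQ : (P + δ) * Q < y := by
    have heq : (P + δ) * Q = P * Q + (y - P * Q) / 2 := by
      rw [hδ]
      field_simp
    rw [heq]
    have : 0 < y - P * Q := sub_pos.2 hy
    linarith
  have ev1 : ∀ᶠ z in 𝓝[s] x, w z < P + δ := hw x hx (P + δ) (by linarith)
  have hqt : Tendsto q (𝓝[s] x) (𝓝 Q) := hq x hx
  have ev2 : ∀ᶠ z in 𝓝[s] x, (P + δ) * q z < y :=
    (hqt.const_mul (P + δ)).eventually_lt_const hPQ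
  have ev3 : ∀ᶠ z in 𝓝[s] x, 0 < q z := hqt.eventually_const_lt hQpos
  filter_upwards [ev1, ev2, ev3] with z h1 h2 h3
  calc w z * q z ≤ (P + δ) * q z := mul_le_mul_of_nonneg_right h1.le h3.le
    _ < y := h2

lemma aux_frame {N k : ℕ} (hk1 : 1 ≤ k) (hkN : k ≤ N) (v : EuclideanSpace ℝ (Fin N)) :
    ∃ ξ : Fin k → EuclideanSpace ℝ (Fin N), Orthonormal ℝ ξ ∧
      ∑ i, ⟪v, ξ i⟫ ^ 2 = ‖v‖ ^ 2 := by
  have hN1 : 1 ≤ N := le_trans hk1 hkN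
  have hkN' : k ≤ Module.finrank ℝ (EuclideanSpace ℝ (Fin N)) := by
    rw [finrank_euclideanSpace_fin]; exact hkN
  by_cases hv : v = 0
  · refine ⟨(stdOrthonormalBasis ℝ (EuclideanSpace ℝ (Fin N))) ∘ Fin.castLE hkN', ?_, ?_⟩
    · exact (stdOrthonormalBasis ℝ _).orthonormal.comp _ (Fin.castLE_injective hkN')
    · simp [hv]
  · set z0N : Fin N := ⟨0, hN1⟩ with hz0N
    set z0k : Fin k := ⟨0, hk1⟩ with hz0k
    set u : EuclideanSpace ℝ (Fin N) := ‖v‖⁻¹ • v with hu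
    have hvnorm : ‖v‖ ≠ 0 := norm_ne_zero_iff.2 hv
    have hunorm : ‖u‖ = 1 := by
      rw [hu, norm_smul, norm_inv, norm_norm, inv_mul_cancel₀ hvnorm]
    have hON : Orthonormal ℝ (({z0N} : Set (Fin N)).restrict (fun _ => u)) := by
      constructor
      · intro i; exact hunorm
      · intro i j hij
        have hi : (i : Fin N) = z0N := i.2
        have hj : (j : Fin N) = z0N := j.2
        exact absurd (Subtype.ext (hi.trans hj.symm)) hij
    obtain ⟨b, hb⟩ := hON.exists_orthonormalBasis_extension_of_card_eq
      (by simp [finrank_euclideanSpace_fin])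
    have hb0 : b z0N = u := hb z0N rfl
    refine ⟨b ∘ Fin.castLE hkN, b.orthonormal.comp _ (Fin.castLE_injective hkN), ?_⟩
    have hvu : v = ‖v‖ • b z0N := by
      rw [hb0, hu, smul_smul, mul_inv_cancel₀ hvnorm, one_smul]
    have hcast0 : Fin.castLE hkN z0k = z0N := rfl
    have hterm : ∀ i : Fin k, ⟪v, b (Fin.castLE hkN i)⟫ ^ 2 =
        if i = z0k then ‖v‖ ^ 2 else 0 := by
      intro i
      conv_lhs => rw [hvu, real_inner_smul_left, orthonormal_iff_ite.1 b.orthonormal]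
      by_cases h : i = z0k
      · subst h
        simp [hcast0]
      · have hne : ¬(z0N = Fin.castLE hkN i) := by
          intro hc
          exact h (Fin.castLE_injective hkN (by rw [← hc, hcast0]))
        simp [h, hne]
    simp only [Function.comp_apply]
    rw [Finset.sum_congr rfl (fun i _ => hterm i)]
    simp

lemma aux_poly (β G R : ℝ) (hβ : 1 ≤ β) (hG : 0 < G) (hGR : G ≤ R ^ 2) :
    (4 * β * G - 8 * (R ^ 2 - G)) * R ^ 2 ≤ 2 * β * (2 + β) * G ^ 2 := by
  nlinarith [sq_nonneg (β * (β + 2) * G - (β + 2) * R ^ 2),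
    mul_pos (show (0:ℝ) < β by linarith) (show (0:ℝ) < β + 2 by linarith),
    mul_nonneg (mul_nonneg (show (0:ℝ) ≤ β + 2 by linarith) (show (0:ℝ) ≤ 3 * β - 2 by linarith))
      (pow_nonneg (by positivity : (0:ℝ) ≤ R ^ 2) 2)]

set_option maxHeartbeats 1000000 in
/-- upper bound on `μ̄ₖ⁻(Ω)` when `Ω` contains a ball of radius `R₁`. -/
theorem statement10 {N : ℕ} (hN : 2 ≤ N) (k : ℕ) (hk1 : 1 ≤ k) (hkN : k < N)
    (Ω : Set (EuclideanSpace ℝ (Fin N))) (hΩopen : IsOpen Ω)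
    (hΩbdd : Bornology.IsBounded Ω)
    (H : EuclideanSpace ℝ (Fin N) → EuclideanSpace ℝ (Fin N) → ℝ)
    (hHcont : ContinuousOn (Function.uncurry H)
      (Ω ×ˢ (univ : Set (EuclideanSpace ℝ (Fin N)))))
    (hSC2 : SC2 Ω H) (hSC3 : SC3 Ω H)
    (b : ℝ) (hb : 0 ≤ b) (hSC1 : SC1 Ω H b)
    (R₁ : ℝ) (hR₁ : 0 < R₁)
    (hball : ∃ c : EuclideanSpace ℝ (Fin N), ball c R₁ ⊆ Ω) :
    muBarMinus k Ω H ≤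
      ((2 * ((k : ℝ) + b * R₁) * (2 + (k : ℝ) + b * R₁) / R₁ ^ 2 : ℝ) : EReal) := by
  classical
  obtain ⟨c, hball_sub⟩ := hball
  refine sSup_le ?_
  rintro m ⟨μ, rfl, w, hwusc, hwneg, hwsub⟩
  rw [EReal.coe_le_coe_iff]
  -- setup
  have hcball : closedBall c R₁ ⊆ closure Ω := by
    rw [← closure_ball c (ne_of_gt hR₁)]
    exact closure_mono hball_sub
  have hballΩ : ball c R₁ ⊆ Ω := hball_sub
  have hballcl : ball c R₁ ⊆ closure Ω := hballΩ.trans subset_closure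
  obtain ⟨xM, hxM, hM⟩ := usc_max (isCompact_closedBall c R₁)
    ⟨c, mem_closedBall_self hR₁.le⟩ (hwusc.mono hcball)
  set M := w xM with hMdef
  have hMneg : M < 0 := hwneg xM (hcball hxM)
  have hcΩ : c ∈ closure Ω := hcball (mem_closedBall_self hR₁.le)
  have hwc : w c < 0 := hwneg c hcΩ
  set g : EuclideanSpace ℝ (Fin N) → ℝ := fun z => R₁ ^ 2 - ‖z - c‖ ^ 2 with hgdef
  set q : EuclideanSpace ℝ (Fin N) → ℝ := fun z => (g z ^ 2)⁻¹ with hqdef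
  have hballg : ∀ z ∈ ball c R₁, 0 < g z := by
    intro z hz
    rw [mem_ball, dist_eq_norm] at hz
    have h1 : ‖z - c‖ ^ 2 < R₁ ^ 2 := by nlinarith [norm_nonneg (z - c)]
    simp only [hgdef]
    linarith
  have hqpos : ∀ z ∈ ball c R₁, 0 < q z := by
    intro z hz
    have := hballg z hz
    simp only [hqdef]
    positivity
  have hgc : g c = R₁ ^ 2 := by simp [hgdef]
  have hqc : 0 < q c := hqpos c (mem_ball_self hR₁)
  set A : ℝ := -(w c * q c) with hAdef
  have hApos : 0 < A := by
    have := mul_neg_of_neg_of_pos hwc hqc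
    simp only [hAdef]
    linarith
  set g₁ : ℝ := min (R₁ ^ 2 / 2) (Real.sqrt (-M / A)) with hg₁def
  have hg₁pos : 0 < g₁ :=
    lt_min (by positivity) (Real.sqrt_pos.2 (div_pos (neg_pos.2 hMneg) hApos))
  have hg₁R : g₁ ≤ R₁ ^ 2 / 2 := min_le_left _ _
  have hg₁sq : A * g₁ ^ 2 ≤ -M := by
    have h1 : g₁ ≤ Real.sqrt (-M / A) := min_le_right _ _
    have h2 : Real.sqrt (-M / A) ^ 2 = -M / A :=
      Real.sq_sqrt (le_of_lt (div_pos (neg_pos.2 hMneg) hApos))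
    have h3 : g₁ ^ 2 ≤ -M / A := by nlinarith [hg₁pos.le, Real.sqrt_nonneg (-M / A)]
    calc A * g₁ ^ 2 ≤ A * (-M / A) := by nlinarith
      _ = -M := by field_simp
  set rad : ℝ := Real.sqrt (R₁ ^ 2 - g₁) with hraddef
  have hradnn : 0 ≤ rad := Real.sqrt_nonneg _
  have hradsq : rad ^ 2 = R₁ ^ 2 - g₁ := Real.sq_sqrt (by nlinarith)
  have hrad_lt : rad < R₁ := by
    have h1 : rad ^ 2 < R₁ ^ 2 := by rw [hradsq]; linarith
    nlinarith
  set K' : Set (EuclideanSpace ℝ (Fin N)) := closedBall c rad with hK'def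
  have hK'g : ∀ z ∈ K', g₁ ≤ g z := by
    intro z hz
    rw [hK'def, mem_closedBall, dist_eq_norm] at hz
    have h2 : ‖z - c‖ ^ 2 ≤ R₁ ^ 2 - g₁ := by nlinarith [norm_nonneg (z - c)]
    simp only [hgdef]
    linarith
  have hK'ball : K' ⊆ ball c R₁ := by
    intro z hz
    rw [hK'def, mem_closedBall] at hz
    rw [mem_ball]
    linarith
  have hnotK' : ∀ z, z ∉ K' → g z < g₁ := by
    intro z hz
    rw [hK'def, mem_closedBall, dist_eq_norm, not_le] at hz
    have h2 : R₁ ^ 2 - g₁ < ‖z - c‖ ^ 2 := by nlinarith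
    simp only [hgdef]
    linarith
  have hgcont : Continuous g := by
    simp only [hgdef]
    fun_prop
  have hqcont : ContinuousOn q K' := by
    refine ContinuousOn.inv₀ ((hgcont.pow 2).continuousOn) ?_
    intro z hz
    have := lt_of_lt_of_le hg₁pos (hK'g z hz)
    positivity
  have hK'cl : K' ⊆ closure Ω := hK'ball.trans hballcl
  have hGusc := usc_mul (hwusc.mono hK'cl) hqcont
    (fun z hz => hqpos z (hK'ball hz))
  obtain ⟨x₀, hx₀K', hx₀max⟩ := usc_max (isCompact_closedBall c rad)
    ⟨c, mem_closedBall_self hradnn⟩ hGusc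
  have hx₀ball : x₀ ∈ ball c R₁ := hK'ball hx₀K'
  have hx₀Ω : x₀ ∈ Ω := hballΩ hx₀ball
  have hg₀pos : 0 < g x₀ := hballg x₀ hx₀ball
  have hq₀pos : 0 < q x₀ := hqpos x₀ hx₀ball
  have hwx₀neg : w x₀ < 0 := hwneg x₀ (hballcl hx₀ball)
  set t : ℝ := -(w x₀ * q x₀) with htdef
  have htpos : 0 < t := by
    have := mul_neg_of_neg_of_pos hwx₀neg hq₀pos
    simp only [htdef]
    linarith
  have hcK' : c ∈ K' := mem_closedBall_self hradnn
  have ht_le_A : t ≤ A := by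
    have := hx₀max c hcK'
    simp only [htdef, hAdef]
    linarith
  have hqg : ∀ z ∈ ball c R₁, q z * g z ^ 2 = 1 := by
    intro z hz
    have := hballg z hz
    simp only [hqdef]
    field_simp
  have hwx₀eq : w x₀ = -t * g x₀ ^ 2 := by
    have h1 := hqg x₀ hx₀ball
    have h2 : -t * g x₀ ^ 2 = w x₀ * (q x₀ * g x₀ ^ 2) := by
      simp only [htdef]; ring
    rw [h2, h1, mul_one]
  have hkey : ∀ z ∈ ball c R₁, w z ≤ -t * g z ^ 2 := by
    intro z hz
    by_cases hzK' : z ∈ K'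
    · have h1 : w z * q z ≤ w x₀ * q x₀ := hx₀max z hzK'
      have h2 := mul_le_mul_of_nonneg_right h1 (sq_nonneg (g z))
      have h3 := hqg z hz
      calc w z = w z * (q z * g z ^ 2) := by rw [h3, mul_one]
        _ = w z * q z * g z ^ 2 := by ring
        _ ≤ w x₀ * q x₀ * g z ^ 2 := h2
        _ = -t * g z ^ 2 := by simp only [htdef]; ring
    · have h1 : w z ≤ M := hM z (ball_subset_closedBall hz)
      have h2 : g z < g₁ := hnotK' z hzK'
      have h3 : 0 < g z := hballg z hz
      have h4 : g z ^ 2 ≤ g₁ ^ 2 := by nlinarith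
      have h5 : t * g z ^ 2 ≤ A * g₁ ^ 2 := by
        nlinarith [mul_nonneg (sub_nonneg.2 ht_le_A) (sq_nonneg (g z)),
          mul_nonneg hApos.le (sub_nonneg.2 h4)]
      linarith
  -- the test function
  set φ : EuclideanSpace ℝ (Fin N) → ℝ :=
    fun y => -t * (R₁ ^ 2 - ⟪y - c, y - c⟫) ^ 2 with hφdef
  have hφval : ∀ y, φ y = -t * g y ^ 2 := by
    intro y
    simp only [hφdef, hgdef, real_inner_self_eq_norm_sq]
  have hC2 : ContDiffAt ℝ 2 φ x₀ := (aux_contDiff t R₁ c).contDiffAt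
  have hmaxOn : IsLocalMaxOn (fun x => w x - φ x) Ω x₀ := by
    have hball_nhds : ball c R₁ ∈ 𝓝[Ω] x₀ :=
      nhdsWithin_le_nhds (isOpen_ball.mem_nhds hx₀ball)
    filter_upwards [hball_nhds] with y hy
    have e1 : w y ≤ -t * g y ^ 2 := hkey y hy
    have e2 : w x₀ = -t * g x₀ ^ 2 := hwx₀eq
    simp only [hφval]
    linarith
  have hvisc := hwsub x₀ hx₀Ω φ hC2 hmaxOn
  -- quantities
  set v : EuclideanSpace ℝ (Fin N) := x₀ - c with hvdef
  set r₀ : ℝ := ‖v‖ with hr₀def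
  have hr₀nn : 0 ≤ r₀ := norm_nonneg v
  have hr₀lt : r₀ < R₁ := by
    rw [mem_ball, dist_eq_norm] at hx₀ball
    simpa [hr₀def, hvdef] using hx₀ball
  have hinner : ⟪x₀ - c, x₀ - c⟫ = ‖x₀ - c‖ ^ 2 := real_inner_self_eq_norm_sq _
  have hg₀eq : g x₀ = R₁ ^ 2 - r₀ ^ 2 := by simp only [hgdef, hr₀def, hvdef]
  -- gradient
  have hgrad : gradient φ x₀ = t • ((4 * g x₀) • v) := by
    rw [hφdef, aux_gradient t R₁ c x₀, hinner]
    rw [smul_smul]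
    simp only [hgdef, hvdef]
    ring_nf
  -- Hessian frame bound
  obtain ⟨ξ, hξon, hξsum⟩ := aux_frame hk1 hkN.le v
  have hξnorm : ∀ i, ‖ξ i‖ = 1 := hξon.1
  have hterm : ∀ i, iteratedFDeriv ℝ 2 φ x₀ ![ξ i, ξ i] =
      4 * t * g x₀ - 8 * t * ⟪v, ξ i⟫ ^ 2 := by
    intro i
    rw [hφdef, aux_hessian t R₁ c x₀ (ξ i), hinner]
    have h1 : ⟪ξ i, ξ i⟫ = 1 := by
      rw [real_inner_self_eq_norm_sq, hξnorm i, one_pow]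
    rw [h1]
    simp only [hgdef, hvdef]
    ring
  have hsum : ∑ i, iteratedFDeriv ℝ 2 φ x₀ ![ξ i, ξ i] =
      4 * t * g x₀ * (k : ℝ) - 8 * t * r₀ ^ 2 := by
    rw [Finset.sum_congr rfl (fun i _ => hterm i), Finset.sum_sub_distrib,
      Finset.sum_const, ← Finset.mul_sum, hξsum]
    simp only [Finset.card_univ, Fintype.card_fin, nsmul_eq_mul, hr₀def]
    ring
  have hPle : Pminus k φ x₀ ≤ 4 * t * g x₀ * (k : ℝ) - 8 * t * r₀ ^ 2 := by
    rw [← hsum]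
    apply csInf_le
    · refine ⟨-(k * ‖iteratedFDeriv ℝ 2 φ x₀‖), ?_⟩
      rintro s ⟨ζ, hζ, rfl⟩
      have hper : ∀ i, -‖iteratedFDeriv ℝ 2 φ x₀‖ ≤ iteratedFDeriv ℝ 2 φ x₀ ![ζ i, ζ i] := by
        intro i
        have h1 := (iteratedFDeriv ℝ 2 φ x₀).le_opNorm ![ζ i, ζ i]
        have h2 : ∏ j, ‖(![ζ i, ζ i]) j‖ = 1 := by
          rw [Fin.prod_univ_two]
          simp [hζ.1 i]
        rw [h2, mul_one, Real.norm_eq_abs, abs_le] at h1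
        exact h1.1
      calc -((k : ℝ) * ‖iteratedFDeriv ℝ 2 φ x₀‖)
          = ∑ _i : Fin k, -‖iteratedFDeriv ℝ 2 φ x₀‖ := by
            simp only [Finset.sum_const, Finset.card_univ, Fintype.card_fin, nsmul_eq_mul]
            ring
        _ ≤ ∑ i, iteratedFDeriv ℝ 2 φ x₀ ![ζ i, ζ i] :=
            Finset.sum_le_sum (fun i _ => hper i)
    · exact ⟨ξ, hξon, rfl⟩
  -- H bounds
  have hH2 : H x₀ (t • ((4 * g x₀) • v)) = t * H x₀ ((4 * g x₀) • v) :=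
    hSC2 x₀ hx₀Ω t htpos.le _
  have hH1 : |H x₀ ((4 * g x₀) • v)| ≤ b * (4 * g x₀ * r₀) := by
    have h1 := hSC1 x₀ hx₀Ω ((4 * g x₀) • v)
    have h2 : ‖(4 * g x₀) • v‖ = 4 * g x₀ * r₀ := by
      rw [norm_smul, Real.norm_eq_abs, abs_of_pos (by positivity)]
    rwa [h2] at h1
  have hHub : H x₀ ((4 * g x₀) • v) ≤ b * (4 * g x₀ * r₀) := (abs_le.1 hH1).2
  -- assemble
  rw [hgrad, hH2, hwx₀eq] at hvisc
  simp only at hvisc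
  have h6 : t * H x₀ ((4 * g x₀) • v) ≤ t * (b * (4 * g x₀ * r₀)) :=
    mul_le_mul_of_nonneg_left hHub htpos.le
  have hmain : μ * (t * g x₀ ^ 2) ≤ t * (4 * g x₀ * (k : ℝ) - 8 * r₀ ^ 2 + b * (4 * g x₀ * r₀)) := by
    linarith [hvisc, hPle, h6]
  have hdiv : μ * g x₀ ^ 2 ≤ 4 * g x₀ * (k : ℝ) - 8 * r₀ ^ 2 + b * (4 * g x₀ * r₀) := by
    refine le_of_mul_le_mul_left ?_ htpos
    linarith [hmain]
  rw [div_eq_mul_inv, ← div_eq_mul_inv, le_div_iff₀ (by positivity : (0:ℝ) < R₁ ^ 2)]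
  -- final polynomial inequality
  have hk1' : (1 : ℝ) ≤ (k : ℝ) := by exact_mod_cast hk1
  set β : ℝ := (k : ℝ) + b * R₁ with hβdef
  have hβ1 : 1 ≤ β := by nlinarith [mul_nonneg hb hR₁.le]
  have hg₀R : g x₀ ≤ R₁ ^ 2 := by
    rw [hg₀eq]; nlinarith
  have hstep : μ * g x₀ ^ 2 ≤ 4 * β * g x₀ - 8 * (R₁ ^ 2 - g x₀) := by
    have h1 : b * (4 * g x₀ * r₀) ≤ 4 * b * R₁ * g x₀ := by
      nlinarith [mul_nonneg (mul_nonneg hb hg₀pos.le) (sub_nonneg.2 hr₀lt.le)]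
    have h2 : r₀ ^ 2 = R₁ ^ 2 - g x₀ := by rw [hg₀eq]; ring
    have hβg : β * g x₀ = (k : ℝ) * g x₀ + b * R₁ * g x₀ := by rw [hβdef]; ring
    linarith [hdiv, h1, h2, hβg]
  have hpoly : (4 * β * g x₀ - 8 * (R₁ ^ 2 - g x₀)) * R₁ ^ 2 ≤ 2 * β * (2 + β) * g x₀ ^ 2 :=
    aux_poly β (g x₀) R₁ hβ1 hg₀pos hg₀R
  have hfin : μ * R₁ ^ 2 * g x₀ ^ 2 ≤ 2 * β * (2 + β) * g x₀ ^ 2 := by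
    have h3 := mul_le_mul_of_nonneg_right hstep (sq_nonneg R₁)
    linarith [h3, hpoly]
  have hfin2 : μ * R₁ ^ 2 ≤ 2 * β * (2 + β) :=
    le_of_mul_le_mul_right (by linarith [hfin]) (by positivity : (0:ℝ) < g x₀ ^ 2)
  rw [hβdef] at hfin2
  exact hfin2.trans_eq (by ring)
end

section
/- Let N ≥ 2, 1 ≤ k < N, let Ω ⊂ ℝ^N be a bounded open set, and let H : Ω × ℝ^N → ℝ be continuous and satisfy (SC2) and (SC3); set b = sup{|H(x,ξ)| : x ∈ Ω, |ξ| ≤ 1}. If Ω is contained in an open ball of radius R₂ > 0 and bR₂ ≤ k, then μ̄ₖ⁻(Ω) ≥ 2(k − bR₂)/R₂². -/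
open Metric Filter Topology Set

open scoped RealInnerProductSpace

section Aux

open scoped RealInnerProductSpace

lemma aux_oneD {g g' : ℝ → ℝ} {a : ℝ}
    (hg' : ∀ᶠ t in 𝓝 (0:ℝ), HasDerivAt g (g' t) t)
    (hg'' : HasDerivAt g' a 0) (hg'0 : g' 0 = 0) (hmax : IsLocalMax g 0) : a ≤ 0 := by
  by_contra hpos
  push_neg at hpos
  have hslope : Tendsto (slope g' 0) (𝓝[≠] (0:ℝ)) (𝓝 a) :=
    hasDerivAt_iff_tendsto_slope.1 hg''
  have hev : ∀ᶠ t in 𝓝[≠] (0:ℝ), 0 < slope g' 0 t :=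
    hslope.eventually (eventually_gt_nhds hpos)
  rw [eventually_nhdsWithin_iff] at hev
  have hall : ∀ᶠ t in 𝓝 (0:ℝ),
      (HasDerivAt g (g' t) t ∧ g t ≤ g 0) ∧ (t ∈ ({0}ᶜ : Set ℝ) → 0 < slope g' 0 t) :=
    (hg'.and hmax).and hev
  obtain ⟨ε, hε, hP⟩ := Metric.eventually_nhds_iff.1 hall
  set δ := ε/2 with hδ
  have hδpos : 0 < δ := by positivity
  have hmem : ∀ t ∈ Icc (0:ℝ) δ, dist t 0 < ε := by
    intro t ht
    rw [Real.dist_eq, sub_zero, abs_of_nonneg ht.1]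
    calc t ≤ δ := ht.2
    _ < ε := by rw [hδ]; linarith
  have hcont : ContinuousOn g (Icc (0:ℝ) δ) := fun t ht =>
    ((hP (hmem t ht)).1.1.continuousAt).continuousWithinAt
  have hderiv : ∀ t ∈ interior (Icc (0:ℝ) δ), 0 < deriv g t := by
    intro t ht
    rw [interior_Icc] at ht
    have hd := hmem t ⟨ht.1.le, ht.2.le⟩
    have h1 := (hP hd).1.1
    have h2 := (hP hd).2 (by simpa using ht.1.ne')
    rw [slope_def_field, hg'0, sub_zero, sub_zero, div_pos_iff] at h2
    rw [h1.deriv]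
    rcases h2 with ⟨h, _⟩ | ⟨_, h⟩
    · exact h
    · linarith [ht.1]
  have hmono := strictMonoOn_of_deriv_pos (convex_Icc (0:ℝ) δ) hcont hderiv
  have := hmono (left_mem_Icc.2 hδpos.le) (right_mem_Icc.2 hδpos.le) hδpos
  have hle := (hP (hmem δ (right_mem_Icc.2 hδpos.le))).1.2
  linarith


variable {N : ℕ}
local notation "EN" => EuclideanSpace ℝ (Fin N)


variable {N : ℕ}


lemma aux_hasFDerivAt_w (c : EN) (s : ℝ) (x : EN) :
    HasFDerivAt (fun y : EN => (⟪y - c, y - c⟫ - s) / 2)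
      (InnerProductSpace.toDual ℝ EN (x - c)) x := by
  have h0 : HasFDerivAt (fun y : EN => y - c) (ContinuousLinearMap.id ℝ EN) x := by
    simpa using (hasFDerivAt_id x).sub_const c
  have h1 := ((h0.inner ℝ h0).sub_const s).const_smul ((2:ℝ)⁻¹)
  have heq : (fun y : EN => (⟪y - c, y - c⟫ - s) / 2)
      = fun y : EN => (2:ℝ)⁻¹ • (⟪y - c, y - c⟫ - s) := by
    funext y; simp [smul_eq_mul]; ring
  rw [heq]
  refine h1.congr_fderiv ?_
  ext h
  simp only [ContinuousLinearMap.coe_smul', Pi.smul_apply, ContinuousLinearMap.coe_comp',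
    Function.comp_apply, ContinuousLinearMap.prod_apply, ContinuousLinearMap.coe_id', id_eq,
    fderivInnerCLM_apply, InnerProductSpace.toDual_apply_apply, smul_eq_mul]
  rw [real_inner_comm h (x - c)]
  ring

lemma aux_second {φ : EN → ℝ} {x₀ c : EN} {s : ℝ}
    (hφ : ContDiffAt ℝ 2 φ x₀)
    (hmax : IsLocalMax (fun x : EN => (⟪x - c, x - c⟫ - s) / 2 - φ x) x₀)
    (v : EN) (hv : ‖v‖ = 1) :
    1 ≤ fderiv ℝ (fderiv ℝ φ) x₀ v v := by
  set L : ℝ → EN := fun t => x₀ + t • v with hLdef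
  have hL : ∀ t : ℝ, HasDerivAt L v t := fun t => by
    have := ((hasDerivAt_id t).smul_const v).const_add x₀
    simp only [one_smul] at this
    exact this
  have hL0 : L 0 = x₀ := by simp [hLdef]
  have hLt : Tendsto L (𝓝 0) (𝓝 x₀) := by
    have := ((hL 0).continuousAt : ContinuousAt L 0)
    rwa [ContinuousAt, hL0] at this
  set a : ℝ := ⟪x₀ - c, v⟫ with hadef
  set w : EN → ℝ := fun x : EN => (⟪x - c, x - c⟫ - s) / 2 with hwdef
  have hwq : ∀ t : ℝ, w (L t) = w x₀ + a * t + t ^ 2 / 2 := by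
    intro t
    have h1 : x₀ + t • v - c = (x₀ - c) + t • v := by abel
    simp only [hwdef, hLdef]
    rw [h1, real_inner_add_add_self, real_inner_smul_right, real_inner_smul_left,
      real_inner_smul_right, real_inner_self_eq_norm_sq v, hv, ← hadef]
    ring
  set g : ℝ → ℝ := fun t => (w x₀ + a * t + t ^ 2 / 2) - φ (L t) with hgdef
  have hmaxg : IsLocalMax g 0 := by
    have h := hLt.eventually hmax
    filter_upwards [h] with t ht
    have := ht
    simp only [hgdef, ← hwq, hL0]
    simpa [hL0, hwdef] using ht
  set g' : ℝ → ℝ := fun t => (a + t) - fderiv ℝ φ (L t) v with hg'def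
  have hev2 : ∀ᶠ t in 𝓝 (0:ℝ), ContDiffAt ℝ 2 φ (L t) :=
    hLt.eventually (hφ.eventually (by norm_num))
  have hg' : ∀ᶠ t in 𝓝 (0:ℝ), HasDerivAt g (g' t) t := by
    filter_upwards [hev2] with t ht
    have hφt : HasDerivAt (fun u => φ (L u)) (fderiv ℝ φ (L t) v) t :=
      (ht.differentiableAt (by norm_num)).hasFDerivAt.comp_hasDerivAt t (hL t)
    have hpoly : HasDerivAt (fun u : ℝ => w x₀ + a * u + u ^ 2 / 2) (a + t) t := by
      have h1 : HasDerivAt (fun u : ℝ => u ^ 2) (2 * t) t := by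
        simpa using hasDerivAt_pow 2 t
      have h2 := (((hasDerivAt_id t).const_mul a).const_add (w x₀)).add (h1.div_const 2)
      exact h2.congr_deriv (by ring)
    exact hpoly.sub hφt
  have hd2 : HasFDerivAt (fderiv ℝ φ) (fderiv ℝ (fderiv ℝ φ) x₀) x₀ :=
    ((hφ.fderiv_right (m := 1) (by norm_num)).differentiableAt one_ne_zero).hasFDerivAt
  have hcomp : HasDerivAt (fun t => fderiv ℝ φ (L t)) (fderiv ℝ (fderiv ℝ φ) x₀ v) 0 :=
    hd2.comp_hasDerivAt_of_eq 0 (hL 0) hL0.symm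
  have part2 : HasDerivAt (fun t => fderiv ℝ φ (L t) v)
      (fderiv ℝ (fderiv ℝ φ) x₀ v v) 0 :=
    (ContinuousLinearMap.apply ℝ ℝ v).hasFDerivAt.comp_hasDerivAt 0 hcomp
  have part1 : HasDerivAt (fun t : ℝ => a + t) 1 0 := by
    simpa using (hasDerivAt_id (0:ℝ)).const_add a
  have hg'' : HasDerivAt g' (1 - fderiv ℝ (fderiv ℝ φ) x₀ v v) 0 := part1.sub part2
  have hg'0 : g' 0 = 0 := by
    have d0 : HasDerivAt g (g' 0) 0 := hg'.self_of_nhds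
    have := hmaxg.deriv_eq_zero
    rw [d0.deriv] at this
    exact this
  have := aux_oneD hg' hg'' hg'0 hmaxg
  linarith


lemma aux_mem (k : ℕ) (hkN : k ≤ N)
    (Ω : Set (EuclideanSpace ℝ (Fin N))) (hΩopen : IsOpen Ω)
    (H : EuclideanSpace ℝ (Fin N) → EuclideanSpace ℝ (Fin N) → ℝ)
    (b : ℝ) (hb : 0 ≤ b) (hSC1 : SC1 Ω H b)
    (R₂ : ℝ) (hR₂ : 0 < R₂) (c : EuclideanSpace ℝ (Fin N)) (hc : Ω ⊆ ball c R₂)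
    {μ s : ℝ} (hμ : 0 ≤ μ) (hs : R₂ ^ 2 < s)
    (hμs : μ * s ≤ 2 * ((k : ℝ) - b * R₂)) :
    (μ : EReal) ≤ muBarMinus k Ω H := by
  set w : EuclideanSpace ℝ (Fin N) → ℝ := fun x => (⟪x - c, x - c⟫ - s) / 2 with hwdef
  have hwc : Continuous w := by
    have h1 : Continuous fun x : EuclideanSpace ℝ (Fin N) => x - c := continuous_id.sub continuous_const
    exact (((h1.inner h1).sub continuous_const).div_const 2)
  apply le_sSup
  refine ⟨μ, rfl, w, ?_, ?_, ?_⟩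
  · exact hwc.upperSemicontinuous.upperSemicontinuousOn _
  · intro x hx
    have hx' : x ∈ closedBall c R₂ := by
      have h1 : closure Ω ⊆ closure (ball c R₂) := closure_mono hc
      rw [closure_ball c hR₂.ne'] at h1
      exact h1 hx
    rw [mem_closedBall, dist_eq_norm] at hx'
    have h2 : ⟪x - c, x - c⟫ ≤ R₂ ^ 2 := by
      rw [real_inner_self_eq_norm_sq]
      exact pow_le_pow_left₀ (norm_nonneg _) hx' 2
    have : w x = (⟪x - c, x - c⟫ - s) / 2 := rfl
    rw [this]
    linarith
  · intro x₀ hx₀ φ hφ hmaxOn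
    have hnhds : 𝓝[Ω] x₀ = 𝓝 x₀ := nhdsWithin_eq_nhds.2 (hΩopen.mem_nhds hx₀)
    have hmax : IsLocalMax (fun x => w x - φ x) x₀ := by
      rw [IsLocalMaxOn, hnhds] at hmaxOn
      exact hmaxOn
    have hwD := aux_hasFDerivAt_w c s x₀
    have hφd : DifferentiableAt ℝ φ x₀ := hφ.differentiableAt (by norm_num)
    have hf0 : fderiv ℝ (fun x => w x - φ x) x₀ = 0 := hmax.fderiv_eq_zero
    have hsubd : fderiv ℝ (fun x => w x - φ x) x₀ = fderiv ℝ w x₀ - fderiv ℝ φ x₀ :=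
      fderiv_sub hwD.differentiableAt hφd
    have hfφ : fderiv ℝ φ x₀ = InnerProductSpace.toDual ℝ (EuclideanSpace ℝ (Fin N)) (x₀ - c) := by
      rw [hsubd] at hf0
      rw [← hwD.fderiv]
      exact (sub_eq_zero.1 hf0).symm
    have hgrad : gradient φ x₀ = x₀ - c := by
      have : HasGradientAt φ (x₀ - c) x₀ :=
        hasGradientAt_iff_hasFDerivAt.2 (hfφ ▸ hφd.hasFDerivAt)
      exact this.gradient
    have hPk : (k : ℝ) ≤ Pminus k φ x₀ := by
      rw [Pminus]
      apply le_csInf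
      · refine ⟨_, fun i : Fin k =>
          (EuclideanSpace.basisFun (Fin N) ℝ) (Fin.castLE hkN i), ?_, rfl⟩
        exact (EuclideanSpace.basisFun (Fin N) ℝ).orthonormal.comp _ (Fin.castLE_injective hkN)
      · rintro r ⟨ξ, hξ, rfl⟩
        have hterm : ∀ i : Fin k, (1 : ℝ) ≤ iteratedFDeriv ℝ 2 φ x₀ ![ξ i, ξ i] := by
          intro i
          rw [iteratedFDeriv_two_apply]
          have := aux_second hφ hmax (ξ i) (hξ.1 i)
          simpa using this
        calc (k : ℝ) = ∑ _i : Fin k, (1 : ℝ) := by simp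
        _ ≤ ∑ i, iteratedFDeriv ℝ 2 φ x₀ ![ξ i, ξ i] :=
          Finset.sum_le_sum fun i _ => hterm i
    have hxball : ‖x₀ - c‖ < R₂ := by
      have := hc hx₀
      rwa [mem_ball, dist_eq_norm] at this
    have hH : -(b * R₂) ≤ H x₀ (x₀ - c) := by
      have h1 := hSC1 x₀ hx₀ (x₀ - c)
      have h2 : b * ‖x₀ - c‖ ≤ b * R₂ := mul_le_mul_of_nonneg_left hxball.le hb
      have h3 := neg_abs_le (H x₀ (x₀ - c))
      linarith
    have hw0 : -(s / 2) ≤ w x₀ := by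
      have h1 : (0 : ℝ) ≤ ⟪x₀ - c, x₀ - c⟫ := real_inner_self_nonneg
      have : w x₀ = (⟪x₀ - c, x₀ - c⟫ - s) / 2 := rfl
      rw [this]; linarith
    have hμw : μ * (-(s / 2)) ≤ μ * w x₀ := mul_le_mul_of_nonneg_left hw0 hμ
    rw [hgrad]
    show (0 : ℝ) ≤ Pminus k φ x₀ + H x₀ (x₀ - c) + μ * w x₀
    nlinarith [hPk, hH, hμw, hμs]

end Aux

/-- lower bound on `μ̄ₖ⁻(Ω)` when `Ω` is contained in a ball of radius
`R₂` and `bR₂ ≤ k`. -/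
theorem statement11 {N : ℕ} (hN : 2 ≤ N) (k : ℕ) (hk1 : 1 ≤ k) (hkN : k < N)
    (Ω : Set (EuclideanSpace ℝ (Fin N))) (hΩopen : IsOpen Ω)
    (hΩbdd : Bornology.IsBounded Ω)
    (H : EuclideanSpace ℝ (Fin N) → EuclideanSpace ℝ (Fin N) → ℝ)
    (hHcont : ContinuousOn (Function.uncurry H)
      (Ω ×ˢ (univ : Set (EuclideanSpace ℝ (Fin N)))))
    (hSC2 : SC2 Ω H) (hSC3 : SC3 Ω H)
    (b : ℝ) (hb : 0 ≤ b) (hSC1 : SC1 Ω H b)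
    (R₂ : ℝ) (hR₂ : 0 < R₂)
    (hsub : ∃ c : EuclideanSpace ℝ (Fin N), Ω ⊆ ball c R₂)
    (hbR : b * R₂ ≤ (k : ℝ)) :
    ((2 * ((k : ℝ) - b * R₂) / R₂ ^ 2 : ℝ) : EReal) ≤ muBarMinus k Ω H := by
  obtain ⟨c, hc⟩ := hsub
  set A : ℝ := (k : ℝ) - b * R₂ with hA
  have hA0 : 0 ≤ A := by rw [hA]; linarith
  set t₀ : ℝ := 2 * A / R₂ ^ 2 with ht₀def
  have hR₂sq : 0 < R₂ ^ 2 := by positivity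
  apply le_of_forall_lt
  intro m hm
  rcases lt_or_ge m ((0 : ℝ) : EReal) with hm0 | hm0
  · have h0 : ((0 : ℝ) : EReal) ≤ muBarMinus k Ω H := by
      refine aux_mem k hkN.le Ω hΩopen H b hb hSC1 R₂ hR₂ c hc le_rfl
        (s := R₂ ^ 2 + 1) (by linarith) (by rw [← hA]; linarith)
    exact lt_of_lt_of_le hm0 h0
  · have hmtop : m ≠ ⊤ := ne_top_of_lt hm
    have hmbot : m ≠ ⊥ := by
      intro h; rw [h] at hm0; exact (not_le.2 (EReal.bot_lt_coe 0)) hm0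
    set r : ℝ := m.toReal with hr
    have hmr : m = (r : EReal) := (EReal.coe_toReal hmtop hmbot).symm
    have hr0 : (0 : ℝ) ≤ r := by
      rw [hmr] at hm0; exact_mod_cast hm0
    have hrt : r < t₀ := by
      rw [hmr] at hm
      exact_mod_cast hm
    have ht₀pos : 0 < t₀ := lt_of_le_of_lt hr0 hrt
    have hApos : 0 < 2 * A := by
      rcases div_pos_iff.1 ht₀pos with ⟨h1, _⟩ | ⟨_, h2⟩
      · exact h1
      · linarith
    set μr : ℝ := (r + t₀) / 2 with hμr
    have hrμ : r < μr := by rw [hμr]; linarith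
    have hμt : μr < t₀ := by rw [hμr]; linarith
    have hμpos : 0 < μr := lt_of_le_of_lt hr0 hrμ
    set s : ℝ := 2 * A / μr with hs
    have hss : R₂ ^ 2 < s := by
      have h1 : μr * R₂ ^ 2 < 2 * A := by
        rw [ht₀def] at hμt
        exact (lt_div_iff₀ hR₂sq).1 hμt
      rw [hs, lt_div_iff₀ hμpos]
      linarith [h1]
    have hμs : μr * s ≤ 2 * A := by
      rw [hs, mul_div_cancel₀ _ hμpos.ne']
    have hle : (μr : EReal) ≤ muBarMinus k Ω H :=
      aux_mem k hkN.le Ω hΩopen H b hb hSC1 R₂ hR₂ c hc hμpos.le hss (by rw [← hA]; exact hμs)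
    refine lt_of_lt_of_le ?_ hle
    rw [hmr]
    exact_mod_cast hrμ
end

section
/- Let N ≥ 2, 1 ≤ k < N, R > 0 and b ≥ 0 with bR < k. Let Ω ⊆ B_R(0) be a bounded open subset of ℝ^N and let H : Ω × ℝ^N → ℝ be continuous and satisfy (SC1) with constant b. Then for every μ ∈ ℝ there exists a function w, continuous and strictly positive on cl(Ω), that is a viscosity supersolution of 𝒫⁻ₖ(D²w) + H(x,∇w) + μw = 0 in Ω; consequently μₖ⁺(Ω) = μ̄ₖ⁺(Ω) = +∞. In particular, if H ≡ 0 this holds for every bounded open Ω. -/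
open Metric Filter Topology Set

section AuxiliaryLemmas
variable {N : ℕ}
local notation "E" => EuclideanSpace ℝ (Fin N)

/-- 1-D second derivative test at a local minimum. -/
lemma second_deriv_test {g : ℝ → ℝ} {m : ℝ}
    (hdiff : ∀ᶠ t in 𝓝 (0:ℝ), DifferentiableAt ℝ g t)
    (hf : HasDerivAt (deriv g) m 0) (hmin : IsLocalMin g 0) : 0 ≤ m := by
  by_contra hneg
  push_neg at hneg
  have hd0 : deriv g 0 = 0 := hmin.deriv_eq_zero
  have hslope : Tendsto (slope (deriv g) 0) (𝓝[≠] 0) (𝓝 m) :=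
    hasDerivAt_iff_tendsto_slope.mp hf
  have hev : ∀ᶠ t in 𝓝[>] (0:ℝ), slope (deriv g) 0 t < 0 :=
    (hslope.mono_left (nhdsWithin_mono _ (fun t ht => ne_of_gt ht))).eventually_lt_const hneg
  obtain ⟨u, hu, hIoo⟩ := mem_nhdsGT_iff_exists_Ioo_subset.mp hev
  have hu0 : (0:ℝ) < u := hu
  obtain ⟨ε, hε, hball⟩ := Metric.mem_nhds_iff.mp (hdiff.and (hmin : ∀ᶠ t in 𝓝 (0:ℝ), g 0 ≤ g t))
  set δ := min (ε/2) (u/2) with hδdef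
  have hδ : 0 < δ := lt_min (by linarith) (by linarith)
  have hsub : Icc (0:ℝ) δ ⊆ ball (0:ℝ) ε := by
    intro t ht
    simp only [mem_ball, Real.dist_eq, sub_zero]
    rw [abs_of_nonneg ht.1]
    have : δ ≤ ε/2 := min_le_left _ _
    linarith [ht.2]
  have hanti : StrictAntiOn g (Icc (0:ℝ) δ) := by
    apply strictAntiOn_of_deriv_neg (convex_Icc _ _)
    · intro t ht
      exact ((hball (hsub ht)).1).continuousAt.continuousWithinAt
    · intro t ht
      rw [interior_Icc] at ht
      have htu : t ∈ Ioo (0:ℝ) u := ⟨ht.1, lt_of_lt_of_le ht.2 (le_trans (min_le_right _ _) (by linarith))⟩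
      have := hIoo htu
      simp only [mem_setOf_eq, slope_def_field, hd0] at this
      have h2 : t⁻¹ * deriv g t < 0 := by
        simpa [hd0, slope, vsub_eq_sub, sub_zero] using hIoo htu
      have h3 := mul_neg_of_pos_of_neg ht.1 h2
      rwa [mul_inv_cancel_left₀ (ne_of_gt ht.1)] at h3
  have h1 : g δ < g 0 := hanti (left_mem_Icc.mpr hδ.le) (right_mem_Icc.mpr hδ.le) hδ
  have h2 : g 0 ≤ g δ := (hball (hsub (right_mem_Icc.mpr hδ.le))).2
  linarith

/-- Per-direction Hessian bound at a point of local minimum of `w - φ`,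
for `w x = exp (α (R² - ‖x‖²))` and a direction `ξ` orthogonal to `x₀`. -/
lemma key_direction (α R : ℝ) (x₀ ξ : E) (hξ : ‖ξ‖ = 1)
    (hperp : @inner ℝ _ _ x₀ ξ = 0)
    (φ : E → ℝ) (hφ : ContDiffAt ℝ 2 φ x₀)
    (hmin : IsLocalMin (fun x => Real.exp (α*(R^2-‖x‖^2)) - φ x) x₀) :
    iteratedFDeriv ℝ 2 φ x₀ ![ξ, ξ] ≤ -(2*α) * Real.exp (α*(R^2-‖x₀‖^2)) := by
  set A : ℝ := α*(R^2-‖x₀‖^2) with hA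
  set L : ℝ → E := fun t => x₀ + t • ξ with hLdef
  have hL0 : L 0 = x₀ := by simp [hLdef]
  have hnorm : ∀ t : ℝ, ‖L t‖^2 = ‖x₀‖^2 + t^2 := by
    intro t
    rw [hLdef]
    rw [@norm_add_sq_real]
    rw [real_inner_smul_right, hperp, norm_smul]
    simp [mul_pow, hξ, sq_abs]
  -- the function along the line for `w`
  set gw : ℝ → ℝ := fun t => Real.exp (A - α*t^2) with hgwdef
  have hwL : ∀ t : ℝ, Real.exp (α*(R^2-‖L t‖^2)) = gw t := by
    intro t; rw [hgwdef]; rw [hnorm t]; show Real.exp _ = Real.exp (A - α*t^2); rw [hA]; ring_nf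
  have hgw' : ∀ t : ℝ, HasDerivAt gw (gw t * (-(2*α)*t)) t := by
    intro t
    have h1 : HasDerivAt (fun t : ℝ => A - α*t^2) (-(2*α)*t) t := by
      have := ((hasDerivAt_pow 2 t).const_mul α).const_sub A
      exact this.congr_deriv (by ring)
    have := (Real.hasDerivAt_exp (A - α*t^2)).comp t h1
    exact this
  have hgw'' : HasDerivAt (fun t => gw t * (-(2*α)*t)) (-(2*α) * gw 0) 0 := by
    have := (hgw' 0).mul (((hasDerivAt_id (0:ℝ)).const_mul (-(2*α))))
    exact this.congr_deriv (by simp only [id, mul_zero, zero_mul, mul_one, zero_add]; ring)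
  -- the function along the line for `φ`
  obtain ⟨s, hs_mem, hsCD⟩ := hφ.contDiffOn (le_refl 2) (by norm_num)
  obtain ⟨u, hu_sub, hu_open, hx₀u⟩ := _root_.mem_nhds_iff.mp hs_mem
  have hd1 : ∀ x ∈ u, DifferentiableAt ℝ φ x := fun x hx =>
    ((hsCD.mono hu_sub).contDiffAt (hu_open.mem_nhds hx)).differentiableAt (by norm_num)
  have hLd : ∀ t : ℝ, HasDerivAt L ξ t := by
    intro t
    have := ((hasDerivAt_id t).smul_const ξ).const_add x₀
    simpa [hLdef] using this
  have hLcont : Continuous L := by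
    rw [hLdef]; continuity
  have hev : ∀ᶠ t in 𝓝 (0:ℝ), L t ∈ u := by
    have : Tendsto L (𝓝 0) (𝓝 x₀) := by
      rw [← hL0]; exact hLcont.continuousAt
    exact this.eventually (hu_open.eventually_mem hx₀u)
  set F : ℝ → ℝ := fun t => (fderiv ℝ φ (L t)) ξ with hFdef
  have hφL : ∀ t : ℝ, L t ∈ u → HasDerivAt (fun t => φ (L t)) (F t) t := fun t ht =>
    ((hd1 _ ht).hasFDerivAt.comp_hasDerivAt t (hLd t))
  have hfd : DifferentiableAt ℝ (fderiv ℝ φ) x₀ :=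
    (hφ.fderiv_right (m := 1) (by norm_num)).differentiableAt (by norm_num)
  set D2 : ℝ := (fderiv ℝ (fderiv ℝ φ) x₀ ξ) ξ with hD2
  have hF' : HasDerivAt F D2 0 := by
    have step1 : HasDerivAt (fun t => fderiv ℝ φ (L t)) (fderiv ℝ (fderiv ℝ φ) x₀ ξ) 0 := by
      have h0 : HasFDerivAt (fderiv ℝ φ) (fderiv ℝ (fderiv ℝ φ) x₀) (L 0) := by
        rw [hL0]; exact hfd.hasFDerivAt
      exact h0.comp_hasDerivAt 0 (hLd 0)
    exact (ContinuousLinearMap.apply ℝ ℝ ξ).hasFDerivAt.comp_hasDerivAt 0 step1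
  -- the difference function
  set h : ℝ → ℝ := fun t => gw t - φ (L t) with hhdef
  have hminh : IsLocalMin h 0 := by
    have htd : Tendsto L (𝓝 0) (𝓝 x₀) := by rw [← hL0]; exact hLcont.continuousAt
    have := htd.eventually hmin
    refine this.mono fun t ht => ?_
    simp only [hhdef, ← hwL t]
    calc h 0 = Real.exp (α*(R^2-‖x₀‖^2)) - φ x₀ := by
          simp only [hhdef, ← hwL 0, hL0]
      _ ≤ Real.exp (α*(R^2-‖L t‖^2)) - φ (L t) := ht
  have hh' : ∀ t : ℝ, L t ∈ u → HasDerivAt h (gw t * (-(2*α)*t) - F t) t := fun t ht =>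
    (hgw' t).sub (hφL t ht)
  have hdiffh : ∀ᶠ t in 𝓝 (0:ℝ), DifferentiableAt ℝ h t :=
    hev.mono fun t ht => (hh' t ht).differentiableAt
  have hderiv_eq : deriv h =ᶠ[𝓝 (0:ℝ)] fun t => gw t * (-(2*α)*t) - F t :=
    hev.mono fun t ht => (hh' t ht).deriv
  have hD : HasDerivAt (deriv h) (-(2*α) * gw 0 - D2) 0 :=
    (hgw''.sub hF').congr_of_eventuallyEq hderiv_eq
  have hkey : 0 ≤ -(2*α) * gw 0 - D2 := second_deriv_test hdiffh hD hminh
  have hgw0 : gw 0 = Real.exp (α*(R^2-‖x₀‖^2)) := by simp [hgwdef, hA]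
  have hiter : iteratedFDeriv ℝ 2 φ x₀ ![ξ, ξ] = D2 := by
    rw [iteratedFDeriv_two_apply]
    simp [hD2]
  rw [hiter]
  rw [hgw0] at hkey
  linarith

lemma exists_orthonormal_perp (k : ℕ) (hk : k + 1 ≤ N) (x : E) :
    ∃ ξ : Fin k → E, Orthonormal ℝ ξ ∧ ∀ i, @inner ℝ _ _ x (ξ i) = 0 := by
  set K : Submodule ℝ E := (ℝ ∙ x)ᗮ with hK
  have hdim : k ≤ Module.finrank ℝ K := by
    have h1 : Module.finrank ℝ (ℝ ∙ x) + Module.finrank ℝ K =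
        Module.finrank ℝ (EuclideanSpace ℝ (Fin N)) :=
      Submodule.finrank_add_finrank_orthogonal _
    have h2 : Module.finrank ℝ (ℝ ∙ x) ≤ 1 := by
      simpa using finrank_span_le_card ({x} : Set (EuclideanSpace ℝ (Fin N)))
    have h3 : Module.finrank ℝ (EuclideanSpace ℝ (Fin N)) = N := finrank_euclideanSpace_fin
    omega
  set b := stdOrthonormalBasis ℝ K with hb
  refine ⟨fun i => (b (Fin.castLE hdim i) : E), ?_, ?_⟩
  · rw [orthonormal_iff_ite]
    intro i j
    have hbo := b.orthonormal
    rw [orthonormal_iff_ite] at hbo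
    have := hbo (Fin.castLE hdim i) (Fin.castLE hdim j)
    rw [← Submodule.coe_inner, this]
    congr 1
    simp [Fin.castLE_injective hdim |>.eq_iff]
  · intro i
    have hmem : (b (Fin.castLE hdim i) : E) ∈ K := (b (Fin.castLE hdim i)).2
    have hmem' : (b (Fin.castLE hdim i) : E) ∈ (ℝ ∙ x)ᗮ := hmem
    rw [Submodule.mem_orthogonal] at hmem'
    exact hmem' x (Submodule.mem_span_singleton_self x)

lemma hasFDerivAt_w (α R : ℝ) (x : E) :
    HasFDerivAt (fun x : E => Real.exp (α*(R^2-‖x‖^2)))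
      ((Real.exp (α*(R^2-‖x‖^2)) * (-(2*α))) • (innerSL ℝ x)) x := by
  have hq : HasFDerivAt (fun y : E => ‖y‖^2) ((2:ℕ) • (innerSL ℝ x)) x :=
    (hasStrictFDerivAt_norm_sq x).hasFDerivAt
  have h2 : HasFDerivAt (fun y : E => α*(R^2-‖y‖^2))
      (α • (-((2:ℕ) • (innerSL ℝ x)))) x := (hq.const_sub (R^2)).const_mul α
  have := (Real.hasDerivAt_exp (α*(R^2-‖x‖^2))).comp_hasFDerivAt x h2
  exact this.congr_fderiv (by
    ext ξ
    simp only [ContinuousLinearMap.smul_apply, ContinuousLinearMap.neg_apply, smul_eq_mul, nsmul_eq_mul]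
    push_cast
    ring)

end AuxiliaryLemmas

/-- The main construction. -/
lemma main_construction {N : ℕ} (hN : 2 ≤ N) (k : ℕ) (hk1 : 1 ≤ k) (hkN : k < N)
    (R b : ℝ) (hR : 0 < R) (hb : 0 ≤ b) (hbR : b * R < (k : ℝ))
    (Ω : Set (EuclideanSpace ℝ (Fin N))) (hΩopen : IsOpen Ω)
    (hΩsub : Ω ⊆ ball (0 : EuclideanSpace ℝ (Fin N)) R)
    (H : EuclideanSpace ℝ (Fin N) → EuclideanSpace ℝ (Fin N) → ℝ)
    (hSC1 : SC1 Ω H b) (μ : ℝ) :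
    ∃ w : EuclideanSpace ℝ (Fin N) → ℝ,
      ContinuousOn w (closure Ω) ∧ (∀ x ∈ closure Ω, 0 < w x) ∧
      IsViscSupersol (Pminus k) Ω H μ (fun _ => 0) w := by
  have hkbR : 0 < (k:ℝ) - b*R := by linarith
  set α : ℝ := max (μ/(2*((k:ℝ) - b*R))) 0 with hαdef
  have hα0 : 0 ≤ α := le_max_right _ _
  have hαμ : μ ≤ 2*α*((k:ℝ) - b*R) := by
    have h1 : μ/(2*((k:ℝ)-b*R)) ≤ α := le_max_left _ _
    have h2 : 0 < 2*((k:ℝ)-b*R) := by linarith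
    have := (div_le_iff₀ h2).mp h1
    linarith
  set w : EuclideanSpace ℝ (Fin N) → ℝ := fun x => Real.exp (α*(R^2-‖x‖^2)) with hwdef
  have hwcont : Continuous w := by
    apply Real.continuous_exp.comp
    continuity
  have hwpos : ∀ x, 0 < w x := fun x => Real.exp_pos _
  refine ⟨w, hwcont.continuousOn, fun x _ => hwpos x, ?_⟩
  intro x₀ hx₀ φ hφ hminOn
  have hx₀R : ‖x₀‖ < R := by
    have := hΩsub hx₀
    rwa [mem_ball_zero_iff] at this
  have hmin : IsLocalMin (fun x => w x - φ x) x₀ := by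
    have hnh : 𝓝[Ω] x₀ = 𝓝 x₀ := nhdsWithin_eq_nhds.mpr (hΩopen.mem_nhds hx₀)
    rw [IsLocalMinOn, hnh] at hminOn
    exact hminOn
  -- orthonormal frame orthogonal to x₀
  obtain ⟨ξ, hξon, hξperp⟩ := exists_orthonormal_perp k (by omega) x₀
  have hdir : ∀ i, iteratedFDeriv ℝ 2 φ x₀ ![ξ i, ξ i] ≤ -(2*α) * w x₀ := fun i =>
    key_direction α R x₀ (ξ i) (hξon.1 i) (hξperp i) φ hφ hmin
  -- bound on Pminus
  have hPm : Pminus k φ x₀ ≤ (k:ℝ) * (-(2*α) * w x₀) := by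
    have hmem : (∑ i, iteratedFDeriv ℝ 2 φ x₀ ![ξ i, ξ i]) ∈
        {s : ℝ | ∃ ζ : Fin k → EuclideanSpace ℝ (Fin N), Orthonormal ℝ ζ ∧
          s = ∑ i, iteratedFDeriv ℝ 2 φ x₀ ![ζ i, ζ i]} := ⟨ξ, hξon, rfl⟩
    have hbdd : BddBelow {s : ℝ | ∃ ζ : Fin k → EuclideanSpace ℝ (Fin N), Orthonormal ℝ ζ ∧
        s = ∑ i, iteratedFDeriv ℝ 2 φ x₀ ![ζ i, ζ i]} := by
      refine ⟨-((k:ℝ) * ‖iteratedFDeriv ℝ 2 φ x₀‖), ?_⟩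
      rintro s ⟨ζ, hζ, rfl⟩
      have hterm : ∀ i, -‖iteratedFDeriv ℝ 2 φ x₀‖ ≤ iteratedFDeriv ℝ 2 φ x₀ ![ζ i, ζ i] := by
        intro i
        have h1 := (iteratedFDeriv ℝ 2 φ x₀).le_opNorm ![ζ i, ζ i]
        have h2 : (∏ j, ‖(![ζ i, ζ i] : Fin 2 → EuclideanSpace ℝ (Fin N)) j‖) = 1 := by
          rw [Fin.prod_univ_two]
          simp [hζ.1 i]
        rw [h2, mul_one, Real.norm_eq_abs] at h1
        have := abs_le.mp h1
        linarith [this.1]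
      calc -((k:ℝ) * ‖iteratedFDeriv ℝ 2 φ x₀‖)
          = ∑ _i : Fin k, -‖iteratedFDeriv ℝ 2 φ x₀‖ := by
            rw [Finset.sum_const, Finset.card_univ, Fintype.card_fin]; push_cast; ring
        _ ≤ ∑ i, iteratedFDeriv ℝ 2 φ x₀ ![ζ i, ζ i] := Finset.sum_le_sum fun i _ => hterm i
    have h1 : Pminus k φ x₀ ≤ ∑ i, iteratedFDeriv ℝ 2 φ x₀ ![ξ i, ξ i] :=
      csInf_le hbdd hmem
    have h2 : (∑ i, iteratedFDeriv ℝ 2 φ x₀ ![ξ i, ξ i]) ≤ (k:ℝ) * (-(2*α) * w x₀) := by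
      calc (∑ i, iteratedFDeriv ℝ 2 φ x₀ ![ξ i, ξ i])
          ≤ ∑ _i : Fin k, -(2*α) * w x₀ := Finset.sum_le_sum fun i _ => hdir i
        _ = (k:ℝ) * (-(2*α) * w x₀) := by
            rw [Finset.sum_const, Finset.card_univ, Fintype.card_fin, nsmul_eq_mul]
    linarith
  -- bound on H term
  have hφd : DifferentiableAt ℝ φ x₀ := hφ.differentiableAt (by norm_num)
  have hwd := hasFDerivAt_w (N := N) α R x₀
  have hfeq : fderiv ℝ φ x₀ = (w x₀ * (-(2*α))) • (innerSL ℝ x₀) := by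
    have h0 : fderiv ℝ (fun x => w x - φ x) x₀ = 0 := hmin.fderiv_eq_zero
    rw [fderiv_fun_sub hwd.differentiableAt hφd, hwd.fderiv, sub_eq_zero] at h0
    exact h0.symm
  have hgradnorm : ‖gradient φ x₀‖ ≤ 2*α*(w x₀)*R := by
    have h1 : ‖gradient φ x₀‖ = ‖fderiv ℝ φ x₀‖ := by
      rw [gradient]
      exact LinearIsometryEquiv.norm_map _ _
    rw [h1, hfeq, norm_smul, innerSL_apply_norm, Real.norm_eq_abs, abs_mul,
      abs_of_pos (hwpos x₀), abs_neg, abs_of_nonneg (by linarith : (0:ℝ) ≤ 2*α)]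
    have : ‖x₀‖ ≤ R := hx₀R.le
    nlinarith [mul_nonneg (mul_nonneg (by linarith : (0:ℝ) ≤ 2*α) (hwpos x₀).le) (by linarith : (0:ℝ) ≤ R - ‖x₀‖)]
  have hH : H x₀ (gradient φ x₀) ≤ b * (2*α*(w x₀)*R) := by
    have h1 := hSC1 x₀ hx₀ (gradient φ x₀)
    have h2 := abs_le.mp h1 |>.2
    have h3 : b * ‖gradient φ x₀‖ ≤ b * (2*α*(w x₀)*R) :=
      mul_le_mul_of_nonneg_left hgradnorm hb
    linarith [le_abs_self (H x₀ (gradient φ x₀))]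
  -- combine
  have hwx := hwpos x₀
  simp only []
  have : Pminus k φ x₀ + H x₀ (gradient φ x₀) + μ * w x₀
      ≤ (k:ℝ) * (-(2*α) * w x₀) + b * (2*α*(w x₀)*R) + μ * w x₀ := by linarith
  calc Pminus k φ x₀ + H x₀ (gradient φ x₀) + μ * w x₀
      ≤ (k:ℝ) * (-(2*α) * w x₀) + b * (2*α*(w x₀)*R) + μ * w x₀ := this
    _ = (μ - 2*α*((k:ℝ) - b*R)) * w x₀ := by ring
    _ ≤ 0 := mul_nonpos_of_nonpos_of_nonneg (by linarith) hwx.le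


/-- if `Ω ⊆ B_R(0)` and `bR < k`, then for every `μ` there is a
positive continuous supersolution of `𝒫⁻ₖ(D²w) + H(x,∇w) + μw = 0` on `cl(Ω)`;
consequently `μₖ⁺(Ω) = μ̄ₖ⁺(Ω) = +∞`. -/
theorem statement12 {N : ℕ} (hN : 2 ≤ N) (k : ℕ) (hk1 : 1 ≤ k) (hkN : k < N)
    (R b : ℝ) (hR : 0 < R) (hb : 0 ≤ b) (hbR : b * R < (k : ℝ))
    (Ω : Set (EuclideanSpace ℝ (Fin N))) (hΩopen : IsOpen Ω)
    (hΩsub : Ω ⊆ ball (0 : EuclideanSpace ℝ (Fin N)) R)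
    (H : EuclideanSpace ℝ (Fin N) → EuclideanSpace ℝ (Fin N) → ℝ)
    (hHcont : ContinuousOn (Function.uncurry H)
      (Ω ×ˢ (univ : Set (EuclideanSpace ℝ (Fin N)))))
    (hSC1 : SC1 Ω H b) :
    (∀ μ : ℝ, ∃ w : EuclideanSpace ℝ (Fin N) → ℝ,
      ContinuousOn w (closure Ω) ∧ (∀ x ∈ closure Ω, 0 < w x) ∧
      IsViscSupersol (Pminus k) Ω H μ (fun _ => 0) w) ∧
    muPlus k Ω H = ⊤ ∧ muBarPlus k Ω H = ⊤ := by
  have main := fun μ => main_construction hN k hk1 hkN R b hR hb hbR Ω hΩopen hΩsub H hSC1 μ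
  refine ⟨main, ?_, ?_⟩
  · apply sSup_eq_top.mpr
    intro x hx
    obtain ⟨r, hr1, _⟩ := EReal.exists_between_coe_real hx
    obtain ⟨w, hwc, hwp, hws⟩ := main r
    exact ⟨(r : EReal), ⟨r, rfl, w, (hwc.lowerSemicontinuousOn).mono subset_closure,
      fun y hy => hwp y (subset_closure hy), hws⟩, hr1⟩
  · apply sSup_eq_top.mpr
    intro x hx
    obtain ⟨r, hr1, _⟩ := EReal.exists_between_coe_real hx
    obtain ⟨w, hwc, hwp, hws⟩ := main r
    exact ⟨(r : EReal), ⟨r, rfl, w, hwc.lowerSemicontinuousOn, hwp, hws⟩, hr1⟩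
end

section
/- Let N ≥ 2 and R > 0, and consider the operator 𝒫⁻₁ (i.e. k = 1 and H ≡ 0) on the ball Ω = B_R(0) ⊂ ℝ^N. Then: (a) the function ψ₁(x) = −cos(π|x|/(2R)) is twice continuously differentiable on cl(B_R(0)), negative in B_R(0), zero on ∂B_R(0), and satisfies the pointwise identity 𝒫⁻₁(D²ψ₁(x)) + (π/(2R))² ψ₁(x) = 0 for every x ∈ B_R(0); (b) μ₁⁻(B_R(0)) = (π/(2R))². -/
open Metric Filter Topology Set

noncomputable def cosCoef : ℕ → ℝ := fun n => (-1)^n / (2*n).factorial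

lemma cosCoef_ne (n : ℕ) : cosCoef n ≠ 0 := by
  unfold cosCoef
  apply div_ne_zero
  · exact pow_ne_zero _ (by norm_num)
  · positivity

lemma cosCoef_norm (n : ℕ) : ‖cosCoef n‖ = 1 / (2*n).factorial := by
  unfold cosCoef
  rw [norm_div, norm_pow]
  simp [abs_of_nonneg]

lemma hcos_radius : (FormalMultilinearSeries.ofScalars ℝ cosCoef).radius = ⊤ := by
  apply FormalMultilinearSeries.ofScalars_radius_eq_top_of_tendsto
  · exact Eventually.of_forall cosCoef_ne
  · have key : ∀ n : ℕ, ‖cosCoef (n+1)‖ / ‖cosCoef n‖ ≤ 1/(n+1) := by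
      intro n
      have hfact : ((2*(n+1)).factorial : ℝ) = ((2*n+2) * ((2*n+1) * (2*n).factorial) : ℕ) := by
        norm_cast
      rw [cosCoef_norm, cosCoef_norm, hfact]
      push_cast
      have hp : (0:ℝ) < (2*n).factorial := by positivity
      have heq : (1 / ((2*(n:ℝ)+2) * ((2*n+1) * ((2*n).factorial:ℝ)))) / (1/((2*n).factorial:ℝ))
          = 1/((2*(n:ℝ)+2)*(2*n+1)) := by
        field_simp
      rw [heq]
      apply one_div_le_one_div_of_le (by positivity)
      nlinarith [n.cast_nonneg (α := ℝ)]
    apply squeeze_zero (fun n => div_nonneg (norm_nonneg _) (norm_nonneg _)) key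
    exact tendsto_one_div_add_atTop_nhds_zero_nat

noncomputable def hcos : ℝ → ℝ := FormalMultilinearSeries.ofScalarsSum cosCoef

lemma hcos_analyticAt (s : ℝ) : AnalyticAt ℝ hcos s := by
  have h := (FormalMultilinearSeries.ofScalars ℝ cosCoef).hasFPowerSeriesOnBall
    (by rw [hcos_radius]; exact ENNReal.zero_lt_top)
  exact h.analyticAt_of_mem (by rw [hcos_radius]; simp [EMetric.mem_ball])

lemma hcos_contDiff : ContDiff ℝ 2 hcos :=
  contDiff_iff_contDiffAt.mpr fun s => (hcos_analyticAt s).contDiffAt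

lemma hcos_eq (t : ℝ) : hcos (t^2) = Real.cos t := by
  rw [Real.cos_eq_tsum, hcos, FormalMultilinearSeries.ofScalars_sum_eq]
  refine tsum_congr fun n => ?_
  rw [smul_eq_mul, ← pow_mul]
  unfold cosCoef
  ring

section Smooth

variable {N : ℕ}

lemma psi_contDiff (a c : ℝ) :
    ContDiff ℝ 2 (fun x : EuclideanSpace ℝ (Fin N) => a * -Real.cos (c * ‖x‖)) := by
  have heq : (fun x : EuclideanSpace ℝ (Fin N) => a * -Real.cos (c * ‖x‖))
      = fun x : EuclideanSpace ℝ (Fin N) => a * -hcos (c^2 * ‖x‖^2) := by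
    funext x
    rw [show c^2*‖x‖^2 = (c*‖x‖)^2 by ring, hcos_eq]
  rw [heq]
  exact contDiff_const.mul (hcos_contDiff.comp (contDiff_const.mul (contDiff_norm_sq (𝕜 := ℝ)))).neg

end Smooth

section Directional

variable {E : Type*} [NormedAddCommGroup E] [NormedSpace ℝ E]

lemma line_hasDerivAt (x ξ : E) (t : ℝ) : HasDerivAt (fun t : ℝ => x + t • ξ) ξ t := by
  simpa using ((hasDerivAt_id t).smul_const ξ).const_add x

lemma line_contDiffAt (x ξ : E) : ContDiffAt ℝ 2 (fun t : ℝ => x + t • ξ) 0 :=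
  (contDiff_const.add (contDiff_id.smul contDiff_const)).contDiffAt

lemma second_directional {f : E → ℝ} {x : E} (hf : ContDiffAt ℝ 2 f x) (ξ : E) :
    iteratedFDeriv ℝ 2 f x ![ξ, ξ] = deriv (deriv (fun t : ℝ => f (x + t • ξ))) 0 := by
  obtain ⟨u, hu, hfu⟩ := hf.contDiffOn le_rfl (by simp)
  obtain ⟨v, hvu, hv, hxv⟩ := _root_.mem_nhds_iff.1 hu
  have hfv : ContDiffOn ℝ 2 f v := hfu.mono hvu
  have hev : ∀ᶠ t in 𝓝 (0:ℝ), x + t • ξ ∈ v := by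
    have hc : Continuous (fun t : ℝ => x + t • ξ) := by continuity
    have ht : Filter.Tendsto (fun t : ℝ => x + t • ξ) (𝓝 0) (𝓝 x) := by
      simpa using hc.tendsto 0
    exact ht (hv.mem_nhds hxv)
  have hderiv1 : deriv (fun s : ℝ => f (x + s • ξ))
      =ᶠ[𝓝 (0:ℝ)] fun t => fderiv ℝ f (x + t • ξ) ξ := by
    filter_upwards [hev] with t ht
    have hdf : DifferentiableAt ℝ f (x + t • ξ) :=
      (hfv.differentiableOn two_ne_zero).differentiableAt (hv.mem_nhds ht)
    exact (hdf.hasFDerivAt.comp_hasDerivAt t (line_hasDerivAt x ξ t)).deriv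
  rw [hderiv1.deriv_eq]
  have hfd : DifferentiableAt ℝ (fderiv ℝ f) x :=
    (hf.fderiv_right (m := 1) (by norm_num)).differentiableAt one_ne_zero
  have hcomp : HasDerivAt (fun t : ℝ => fderiv ℝ f (x + t • ξ)) (fderiv ℝ (fderiv ℝ f) x ξ) 0 := by
    have hx0 : x + (0:ℝ) • ξ = x := by simp
    have h := (hx0 ▸ hfd.hasFDerivAt).comp_hasDerivAt 0 (line_hasDerivAt x ξ 0)
    rw [hx0] at h
    exact h
  have happ : HasDerivAt (fun t : ℝ => fderiv ℝ f (x + t • ξ) ξ)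
      (fderiv ℝ (fderiv ℝ f) x ξ ξ) 0 := by
    have h := (ContinuousLinearMap.apply ℝ ℝ ξ).hasFDerivAt.comp_hasDerivAt 0 hcomp
    exact h
  rw [happ.deriv, iteratedFDeriv_two_apply]
  simp

end Directional

section SecondTest

lemma aux_ev_diff {g : ℝ → ℝ} {t₀ : ℝ} (hg : ContDiffAt ℝ 2 g t₀) :
    ∀ᶠ t in 𝓝 t₀, DifferentiableAt ℝ g t := by
  obtain ⟨u, hu, hgu⟩ := hg.contDiffOn le_rfl (by simp)
  obtain ⟨v, hvu, hv, hxv⟩ := _root_.mem_nhds_iff.1 hu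
  filter_upwards [hv.mem_nhds hxv] with t ht
  exact ((hgu.mono hvu).differentiableOn two_ne_zero).differentiableAt (hv.mem_nhds ht)

lemma aux_diff_deriv {g : ℝ → ℝ} {t₀ : ℝ} (hg : ContDiffAt ℝ 2 g t₀) :
    DifferentiableAt ℝ (deriv g) t₀ := by
  have h1 : ContDiffAt ℝ 1 (fderiv ℝ g) t₀ := hg.fderiv_right (m := 1) (by norm_num)
  have h2 : deriv g = fun t => fderiv ℝ g t 1 := by
    funext t; rw [fderiv_apply_one_eq_deriv]
  rw [h2]
  exact ((ContinuousLinearMap.apply ℝ ℝ (1:ℝ)).differentiable.differentiableAt).comp t₀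
    (h1.differentiableAt one_ne_zero)

lemma deriv2_nonpos_of_isLocalMax {g : ℝ → ℝ} (hg : ContDiffAt ℝ 2 g 0)
    (hmax : IsLocalMax g 0) : deriv (deriv g) 0 ≤ 0 := by
  by_contra hpos
  push_neg at hpos
  obtain ⟨u, hu, hgu⟩ := hg.contDiffOn le_rfl (by simp)
  obtain ⟨ε, hε, hball⟩ := Metric.mem_nhds_iff.1 hu
  have hgball : ContDiffOn ℝ 2 g (Metric.ball (0:ℝ) ε) := hgu.mono hball
  have hdiff : ∀ t ∈ Metric.ball (0:ℝ) ε, DifferentiableAt ℝ g t := fun t ht =>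
    (hgball.differentiableOn two_ne_zero).differentiableAt (Metric.isOpen_ball.mem_nhds ht)
  have hzero : deriv g 0 = 0 := hmax.deriv_eq_zero
  have hslope : Filter.Tendsto (slope (deriv g) 0) (𝓝[≠] 0) (𝓝 (deriv (deriv g) 0)) := by
    have := (aux_diff_deriv hg).hasDerivAt
    rwa [hasDerivAt_iff_tendsto_slope] at this
  have hev : ∀ᶠ t in 𝓝[≠] (0:ℝ), 0 < slope (deriv g) 0 t :=
    hslope.eventually (eventually_gt_nhds hpos)
  obtain ⟨δ, hδ, hδev⟩ := Metric.mem_nhdsWithin_iff.1 hev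
  rw [Set.subset_def] at hδev
  set δ' : ℝ := min δ ε with hδ'def
  have hδ' : 0 < δ' := lt_min hδ hε
  -- deriv g is positive on (0, δ')
  have hderivpos : ∀ t ∈ Set.Ioo (0:ℝ) δ', 0 < deriv g t := by
    intro t ht
    have h1 : 0 < slope (deriv g) 0 t := by
      refine hδev t ⟨?_, ?_⟩
      · simp only [Metric.mem_ball, Real.dist_eq, sub_zero]
        rw [abs_of_pos ht.1]
        exact lt_of_lt_of_le ht.2 (min_le_left _ _)
      · exact Set.mem_compl_singleton_iff.mpr (ne_of_gt ht.1)
    rw [slope_def_field, hzero, sub_zero, sub_zero] at h1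
    have := mul_pos h1 ht.1
    rwa [div_mul_cancel₀ _ (ne_of_gt ht.1)] at this
  -- g is strictly monotone on [0, δ')
  have hmono : StrictMonoOn g (Set.Ico (0:ℝ) δ') := by
    apply strictMonoOn_of_deriv_pos (convex_Ico _ _)
    · apply ContinuousOn.mono hgball.continuousOn
      intro t ht
      simp only [Metric.mem_ball, Real.dist_eq, sub_zero]
      rw [abs_of_nonneg ht.1]
      exact lt_of_lt_of_le ht.2 (min_le_right _ _)
    · intro t ht
      rw [interior_Ico] at ht
      exact hderivpos t ht
  -- contradiction with local max
  obtain ⟨δ₂, hδ₂, hδ₂max⟩ := Metric.eventually_nhds_iff.1 hmax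
  set t₀ : ℝ := min δ' δ₂ / 2 with ht₀def
  have ht₀pos : 0 < t₀ := by positivity
  have ht₀lt : t₀ < δ' := by
    have : t₀ ≤ δ' / 2 := by
      rw [ht₀def]
      gcongr
      exact min_le_left _ _
    linarith
  have h1 : g 0 < g t₀ := hmono (Set.mem_Ico.mpr ⟨le_refl 0, hδ'⟩)
      (Set.mem_Ico.mpr ⟨ht₀pos.le, ht₀lt⟩) ht₀pos
  have h2 : g t₀ ≤ g 0 := by
    apply hδ₂max
    simp only [Real.dist_eq, sub_zero]
    rw [abs_of_pos ht₀pos]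
    have : t₀ ≤ δ₂ / 2 := by
      rw [ht₀def]
      gcongr
      exact min_le_right _ _
    linarith
  linarith

end SecondTest

section Radial

lemma q_hasDerivAt (r b t : ℝ) :
    HasDerivAt (fun t : ℝ => r^2 + 2*b*t + t^2) (2*b + 2*t) t := by
  have h1 : HasDerivAt (fun t : ℝ => r^2 + 2*b*t) (2*b) t := by
    simpa using ((hasDerivAt_id t).const_mul (2*b)).const_add (r^2)
  have h2 : HasDerivAt (fun t : ℝ => t^2) (2*t) t := by
    simpa using hasDerivAt_pow 2 t
  exact h1.add h2

lemma radial_deriv2 (a c r b : ℝ) (hr : 0 < r) :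
    deriv (deriv (fun t : ℝ => a * -Real.cos (c * Real.sqrt (r^2 + 2*b*t + t^2)))) 0
      = a * (c^2 * Real.cos (c*r) * (b/r)^2 + c * Real.sin (c*r) * (1 - (b/r)^2) / r) := by
  have hq0 : ∀ᶠ t in 𝓝 (0:ℝ), 0 < r^2 + 2*b*t + t^2 := by
    have hc : Continuous (fun t : ℝ => r^2 + 2*b*t + t^2) := by continuity
    have h0 : (0:ℝ) < r^2 + 2*b*0 + 0^2 := by nlinarith
    have := (hc.tendsto 0).eventually (eventually_gt_nhds h0)
    simpa using this
  have hDG : ∀ᶠ t in 𝓝 (0:ℝ),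
      HasDerivAt (fun t : ℝ => a * -Real.cos (c * Real.sqrt (r^2 + 2*b*t + t^2)))
      (a * (Real.sin (c * Real.sqrt (r^2+2*b*t+t^2)) *
        (c * ((2*b+2*t)/(2*Real.sqrt (r^2+2*b*t+t^2)))))) t := by
    filter_upwards [hq0] with t ht
    have hsd : HasDerivAt (fun t : ℝ => Real.sqrt (r^2+2*b*t+t^2))
        ((2*b+2*t)/(2*Real.sqrt (r^2+2*b*t+t^2))) t :=
      (q_hasDerivAt r b t).sqrt (ne_of_gt ht)
    have hcd : HasDerivAt (fun t : ℝ => Real.cos (c * Real.sqrt (r^2+2*b*t+t^2)))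
        (-Real.sin (c * Real.sqrt (r^2+2*b*t+t^2)) *
          (c * ((2*b+2*t)/(2*Real.sqrt (r^2+2*b*t+t^2))))) t :=
      (Real.hasDerivAt_cos _).comp t (hsd.const_mul c)
    have := (hcd.neg).const_mul a
    exact this.congr_deriv (by ring)
  have h1 : deriv (fun t : ℝ => a * -Real.cos (c * Real.sqrt (r^2 + 2*b*t + t^2)))
      =ᶠ[𝓝 (0:ℝ)] fun t => a * (Real.sin (c * Real.sqrt (r^2+2*b*t+t^2)) *
        (c * ((2*b+2*t)/(2*Real.sqrt (r^2+2*b*t+t^2))))) := by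
    filter_upwards [hDG] with t ht
    exact ht.deriv
  rw [h1.deriv_eq]
  -- now differentiate the first derivative at 0
  have hsq0 : Real.sqrt (r^2 + 2*b*0 + 0^2) = r := by
    simp [Real.sqrt_sq hr.le]
  have hv : HasDerivAt (fun t : ℝ => Real.sqrt (r^2+2*b*t+t^2)) (b/r) 0 := by
    have h := (q_hasDerivAt r b 0).sqrt (by simp; nlinarith)
    rw [hsq0] at h
    convert h using 1
    field_simp
    ring
  have hsin : HasDerivAt (fun t : ℝ => Real.sin (c * Real.sqrt (r^2+2*b*t+t^2)))
      (Real.cos (c*r) * (c * (b/r))) 0 := by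
    have h := (Real.hasDerivAt_sin _).comp 0 (hv.const_mul c)
    rw [hsq0] at h
    exact h
  have hw : HasDerivAt (fun t : ℝ => 2*b+2*t) 2 0 := by
    simpa using ((hasDerivAt_id (0:ℝ)).const_mul 2).const_add (2*b)
  have hden : HasDerivAt (fun t : ℝ => 2 * Real.sqrt (r^2+2*b*t+t^2)) (2*(b/r)) 0 :=
    hv.const_mul 2
  have hdiv : HasDerivAt (fun t : ℝ => (2*b+2*t)/(2*Real.sqrt (r^2+2*b*t+t^2)))
      ((2*(2*r) - (2*b)*(2*(b/r)))/(2*r)^2) 0 := by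
    have h := hw.div hden (by rw [hsq0]; positivity)
    rw [hsq0] at h
    exact h.congr_deriv (by ring)
  have hprod : HasDerivAt (fun t : ℝ => a * (Real.sin (c * Real.sqrt (r^2+2*b*t+t^2)) *
      (c * ((2*b+2*t)/(2*Real.sqrt (r^2+2*b*t+t^2)))))) _ 0 :=
    (hsin.mul (hdiv.const_mul c)).const_mul a
  rw [hprod.deriv]
  rw [hsq0]
  field_simp
  ring

lemma radial_deriv2_zero (a c : ℝ) :
    deriv (deriv (fun t : ℝ => a * -Real.cos (c * t))) 0 = a * c^2 := by
  have hD : ∀ t : ℝ, HasDerivAt (fun t : ℝ => a * -Real.cos (c * t))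
      (a * (Real.sin (c*t) * c)) t := by
    intro t
    have h := (((Real.hasDerivAt_cos (c*t)).comp t ((hasDerivAt_id t).const_mul c)).neg).const_mul a
    exact h.congr_deriv (by ring_nf)
  have h1 : deriv (fun t : ℝ => a * -Real.cos (c * t)) = fun t => a * (Real.sin (c*t) * c) := by
    funext t; exact (hD t).deriv
  rw [h1]
  have h2 : HasDerivAt (fun t : ℝ => a * (Real.sin (c*t) * c))
      (a * ((Real.cos (c*0) * c) * c)) 0 := by
    have h := (((Real.hasDerivAt_sin (c*0)).comp 0 ((hasDerivAt_id 0).const_mul c)).mul_const c).const_mul a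
    exact h.congr_deriv (by ring)
  rw [h2.deriv]
  simp [pow_two]

end Radial

section QuadForm

open RealInnerProductSpace

variable {N : ℕ}

lemma norm_line (x ξ : EuclideanSpace ℝ (Fin N)) (hξ : ‖ξ‖ = 1) (t : ℝ) :
    ‖x + t • ξ‖ = Real.sqrt (‖x‖^2 + 2*⟪x, ξ⟫*t + t^2) := by
  rw [← Real.sqrt_sq (norm_nonneg (x + t • ξ))]
  congr 1
  rw [norm_add_sq_real, real_inner_smul_right, norm_smul, hξ]
  simp only [Real.norm_eq_abs, mul_one]
  rw [sq_abs]
  ring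

lemma quadform_eq (a c : ℝ) (x ξ : EuclideanSpace ℝ (Fin N)) (hx : x ≠ 0) (hξ : ‖ξ‖ = 1) :
    iteratedFDeriv ℝ 2 (fun y : EuclideanSpace ℝ (Fin N) => a * -Real.cos (c * ‖y‖)) x ![ξ, ξ]
      = a * (c^2 * Real.cos (c*‖x‖) * (⟪x, ξ⟫/‖x‖)^2
          + c * Real.sin (c*‖x‖) * (1 - (⟪x, ξ⟫/‖x‖)^2) / ‖x‖) := by
  rw [second_directional ((psi_contDiff a c).contDiffAt) ξ]
  have hfun : (fun t : ℝ => (fun y : EuclideanSpace ℝ (Fin N) => a * -Real.cos (c * ‖y‖)) (x + t • ξ))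
      = fun t : ℝ => a * -Real.cos (c * Real.sqrt (‖x‖^2 + 2*⟪x, ξ⟫*t + t^2)) := by
    funext t
    simp only
    rw [norm_line x ξ hξ]
  rw [hfun]
  exact radial_deriv2 a c ‖x‖ ⟪x, ξ⟫ (norm_pos_iff.mpr hx)

lemma quadform_zero (a c : ℝ) (hc : 0 ≤ c) (ξ : EuclideanSpace ℝ (Fin N)) (hξ : ‖ξ‖ = 1) :
    iteratedFDeriv ℝ 2 (fun y : EuclideanSpace ℝ (Fin N) => a * -Real.cos (c * ‖y‖)) 0 ![ξ, ξ]
      = a * c^2 := by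
  rw [second_directional ((psi_contDiff a c).contDiffAt) ξ]
  have hfun : (fun t : ℝ => (fun y : EuclideanSpace ℝ (Fin N) => a * -Real.cos (c * ‖y‖)) ((0 : EuclideanSpace ℝ (Fin N)) + t • ξ))
      = fun t : ℝ => a * -Real.cos (c * t) := by
    funext t
    simp only [zero_add]
    rw [norm_smul, hξ]
    rw [show c * (‖t‖ * 1) = |c * t| by
      rw [Real.norm_eq_abs, abs_mul, abs_of_nonneg hc]; ring]
    rw [Real.cos_abs]
  rw [hfun]
  exact radial_deriv2_zero a c

lemma quadform_ge (a c : ℝ) (ha : 0 ≤ a) (hc : 0 < c) (x ξ : EuclideanSpace ℝ (Fin N))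
    (hx : c * ‖x‖ < Real.pi/2) (hξ : ‖ξ‖ = 1) :
    a * (c^2 * Real.cos (c*‖x‖))
      ≤ iteratedFDeriv ℝ 2 (fun y : EuclideanSpace ℝ (Fin N) => a * -Real.cos (c * ‖y‖)) x ![ξ, ξ] := by
  rcases eq_or_ne x 0 with rfl | hx0
  · rw [quadform_zero a c hc.le ξ hξ]
    simp
  · rw [quadform_eq a c x ξ hx0 hξ]
    have hr : 0 < ‖x‖ := norm_pos_iff.mpr hx0
    set r : ℝ := ‖x‖ with hrdef
    set b : ℝ := ⟪x, ξ⟫ with hbdef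
    have hb : |b| ≤ r := by
      have := abs_real_inner_le_norm x ξ
      rwa [hξ, mul_one] at this
    have hb2 : b^2 ≤ r^2 := by
      rw [← sq_abs b]
      exact pow_le_pow_left₀ (abs_nonneg b) hb 2
    have hs1 : (b/r)^2 ≤ 1 := by
      rw [div_pow]
      exact div_le_one_of_le₀ hb2 (by positivity)
    have hs0 : (0:ℝ) ≤ (b/r)^2 := sq_nonneg _
    have hθ : 0 < c * r := by positivity
    have hcos : 0 < Real.cos (c*r) := Real.cos_pos_of_mem_Ioo ⟨by linarith, hx⟩
    have htan : c * r * Real.cos (c*r) < Real.sin (c*r) := by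
      have h1 := Real.lt_tan hθ hx
      rw [Real.tan_eq_sin_div_cos] at h1
      have h2 := mul_lt_mul_of_pos_right h1 hcos
      rwa [div_mul_cancel₀ _ (ne_of_gt hcos)] at h2
    have hAB : c^2 * Real.cos (c*r) ≤ c * Real.sin (c*r) / r := by
      rw [le_div_iff₀ hr]
      nlinarith [htan]
    have key : c^2*Real.cos (c*r) ≤ c^2*Real.cos (c*r)*(b/r)^2
        + c*Real.sin (c*r)*(1-(b/r)^2)/r := by
      have h2 : c*Real.sin (c*r)*(1-(b/r)^2)/r = (c*Real.sin (c*r)/r)*(1-(b/r)^2) := by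
        ring
      rw [h2]
      nlinarith [mul_nonneg (sub_nonneg.mpr hAB) (sub_nonneg.mpr hs1)]
    exact mul_le_mul_of_nonneg_left key ha

lemma exists_unit (hN : 1 ≤ N) : ∃ ξ : EuclideanSpace ℝ (Fin N), ‖ξ‖ = 1 := by
  refine ⟨EuclideanSpace.single (⟨0, hN⟩ : Fin N) (1:ℝ), ?_⟩
  rw [EuclideanSpace.norm_single]
  simp

lemma orthonormal_single {ξ : EuclideanSpace ℝ (Fin N)} (hξ : ‖ξ‖ = 1) :
    Orthonormal ℝ (fun _ : Fin 1 => ξ) :=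
  ⟨fun _ => hξ, fun i j h => absurd (Subsingleton.elim i j) h⟩

lemma pminus_ge_of_quad (hN : 1 ≤ N) (φ : EuclideanSpace ℝ (Fin N) → ℝ)
    (x₀ : EuclideanSpace ℝ (Fin N)) (A : ℝ)
    (hA : ∀ ξ : EuclideanSpace ℝ (Fin N), ‖ξ‖ = 1 → A ≤ iteratedFDeriv ℝ 2 φ x₀ ![ξ, ξ]) :
    A ≤ Pminus 1 φ x₀ := by
  apply le_csInf
  · obtain ⟨ξ, hξ⟩ := exists_unit hN
    exact ⟨_, ⟨fun _ => ξ, orthonormal_single hξ, rfl⟩⟩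
  · rintro s ⟨ξ, hon, rfl⟩
    rw [Fin.sum_univ_one]
    exact hA (ξ 0) (hon.1 0)

lemma pminus_psi (a c : ℝ) (ha : 0 ≤ a) (hc : 0 < c) (hN : 1 ≤ N)
    (x : EuclideanSpace ℝ (Fin N)) (hx : c * ‖x‖ < Real.pi/2) :
    Pminus 1 (fun y : EuclideanSpace ℝ (Fin N) => a * -Real.cos (c * ‖y‖)) x
      = a * (c^2 * Real.cos (c * ‖x‖)) := by
  have hlb : ∀ ξ : EuclideanSpace ℝ (Fin N), ‖ξ‖ = 1 →
      a * (c^2 * Real.cos (c*‖x‖)) ≤ iteratedFDeriv ℝ 2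
        (fun y : EuclideanSpace ℝ (Fin N) => a * -Real.cos (c * ‖y‖)) x ![ξ, ξ] :=
    fun ξ hξ => quadform_ge a c ha hc x ξ hx hξ
  have hmem : a * (c^2 * Real.cos (c * ‖x‖)) ∈
      {s : ℝ | ∃ ξ : Fin 1 → EuclideanSpace ℝ (Fin N), Orthonormal ℝ ξ ∧
        s = ∑ i, iteratedFDeriv ℝ 2 (fun y : EuclideanSpace ℝ (Fin N) => a * -Real.cos (c * ‖y‖)) x ![ξ i, ξ i]} := by
    rcases eq_or_ne x 0 with rfl | hx0
    · obtain ⟨ξ, hξ⟩ := exists_unit hN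
      refine ⟨fun _ => ξ, orthonormal_single hξ, ?_⟩
      rw [Fin.sum_univ_one, quadform_zero a c hc.le ξ hξ]
      simp
    · have hr : 0 < ‖x‖ := norm_pos_iff.mpr hx0
      set ξ : EuclideanSpace ℝ (Fin N) := ‖x‖⁻¹ • x with hξdef
      have hξ : ‖ξ‖ = 1 := by
        rw [hξdef, norm_smul, Real.norm_eq_abs, abs_of_pos (inv_pos.mpr hr),
          inv_mul_cancel₀ (ne_of_gt hr)]
      refine ⟨fun _ => ξ, orthonormal_single hξ, ?_⟩
      rw [Fin.sum_univ_one, quadform_eq a c x ξ hx0 hξ]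
      have hb : ⟪x, ξ⟫ = ‖x‖ := by
        rw [hξdef, real_inner_smul_right, real_inner_self_eq_norm_sq, pow_two]
        field_simp
      rw [hb, div_self (ne_of_gt hr)]
      ring
  apply le_antisymm
  · apply csInf_le
    · refine ⟨a * (c^2 * Real.cos (c * ‖x‖)), ?_⟩
      rintro s ⟨ξ, hon, rfl⟩
      rw [Fin.sum_univ_one]
      exact hlb (ξ 0) (hon.1 0)
    · exact hmem
  · exact pminus_ge_of_quad hN _ x _ hlb

end QuadForm

section USCMax

variable {α : Type*} [TopologicalSpace α]

lemma usc_exists_max_s19 {f : α → ℝ} {K : Set α} (hK : IsCompact K)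
    (hne : K.Nonempty) (hf : UpperSemicontinuousOn f K) : ∃ x ∈ K, ∀ y ∈ K, f y ≤ f x := by
  by_contra hcon
  push_neg at hcon
  have hch : ∀ x ∈ K, ∃ m, m ∈ K ∧ ∃ U ∈ 𝓝 x, ∀ z ∈ U ∩ K, f z < f m := by
    intro x hx
    obtain ⟨y, hyK, hxy⟩ := hcon x hx
    have hev : ∀ᶠ z in 𝓝[K] x, f z < f y := hf x hx (f y) hxy
    rw [eventually_iff, mem_nhdsWithin] at hev
    obtain ⟨U, hUopen, hxU, hsub⟩ := hev
    exact ⟨y, hyK, U, hUopen.mem_nhds hxU, fun z hz => hsub hz⟩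
  choose! m hmK U hU hUp using hch
  obtain ⟨t, htK, hcover⟩ := hK.elim_nhds_subcover U (fun x hx => hU x hx)
  have htne : t.Nonempty := by
    by_contra hte
    rw [Finset.not_nonempty_iff_eq_empty] at hte
    obtain ⟨x0, hx0⟩ := hne
    have := hcover hx0
    simp [hte] at this
  obtain ⟨xs, hxst, hxsmax⟩ := t.exists_max_image (fun x => f (m x)) htne
  have h1 : m xs ∈ K := hmK xs (htK xs hxst)
  have h2 := hcover h1
  simp only [Set.mem_iUnion] at h2
  obtain ⟨x₀, hx₀t, hmem⟩ := h2
  have h3 : f (m xs) < f (m x₀) := hUp x₀ (htK _ hx₀t) _ ⟨hmem, h1⟩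
  have h4 : f (m x₀) ≤ f (m xs) := hxsmax x₀ hx₀t
  linarith

end USCMax

section Testing

variable {N : ℕ}

lemma quad_le_of_isLocalMax {φ ψ : EuclideanSpace ℝ (Fin N) → ℝ} {x₀ : EuclideanSpace ℝ (Fin N)}
    (hφ : ContDiffAt ℝ 2 φ x₀) (hψ : ContDiffAt ℝ 2 ψ x₀)
    (hmax : IsLocalMax (fun x => ψ x - φ x) x₀) (ξ : EuclideanSpace ℝ (Fin N)) :
    iteratedFDeriv ℝ 2 ψ x₀ ![ξ, ξ] ≤ iteratedFDeriv ℝ 2 φ x₀ ![ξ, ξ] := by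
  have hline : ContDiffAt ℝ 2 (fun t : ℝ => x₀ + t • ξ) 0 := line_contDiffAt x₀ ξ
  have hψ' : ContDiffAt ℝ 2 ψ (x₀ + (0:ℝ) • ξ) := by simpa using hψ
  have hφ' : ContDiffAt ℝ 2 φ (x₀ + (0:ℝ) • ξ) := by simpa using hφ
  have hgψ : ContDiffAt ℝ 2 (fun t : ℝ => ψ (x₀ + t • ξ)) 0 := hψ'.comp 0 hline
  have hgφ : ContDiffAt ℝ 2 (fun t : ℝ => φ (x₀ + t • ξ)) 0 := hφ'.comp 0 hline
  have hcont : Filter.Tendsto (fun t : ℝ => x₀ + t • ξ) (𝓝 0) (𝓝 x₀) := by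
    have hc : Continuous (fun t : ℝ => x₀ + t • ξ) := by continuity
    simpa using hc.tendsto 0
  have hgmax : IsLocalMax (fun t : ℝ => ψ (x₀ + t • ξ) - φ (x₀ + t • ξ)) 0 := by
    have h := hcont.eventually hmax
    refine h.mono fun t ht => ?_
    simpa using ht
  have hsub : deriv (deriv (fun t : ℝ => ψ (x₀ + t • ξ) - φ (x₀ + t • ξ))) 0
      = deriv (deriv (fun t : ℝ => ψ (x₀ + t • ξ))) 0
        - deriv (deriv (fun t : ℝ => φ (x₀ + t • ξ))) 0 := by
    have hev : deriv (fun t : ℝ => ψ (x₀ + t • ξ) - φ (x₀ + t • ξ))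
        =ᶠ[𝓝 (0:ℝ)] fun t => deriv (fun t : ℝ => ψ (x₀ + t • ξ)) t
          - deriv (fun t : ℝ => φ (x₀ + t • ξ)) t := by
      filter_upwards [aux_ev_diff hgψ, aux_ev_diff hgφ] with t h1 h2
      exact deriv_sub h1 h2
    rw [hev.deriv_eq]
    exact deriv_sub (aux_diff_deriv hgψ) (aux_diff_deriv hgφ)
  have hle : deriv (deriv (fun t : ℝ => ψ (x₀ + t • ξ) - φ (x₀ + t • ξ))) 0 ≤ 0 :=
    deriv2_nonpos_of_isLocalMax (hgψ.sub hgφ) hgmax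
  rw [second_directional hψ ξ, second_directional hφ ξ]
  linarith [hsub ▸ hle]

end Testing

section MuBound

variable {N : ℕ}

set_option maxHeartbeats 1600000 in
lemma mu_le (hN : 1 ≤ N) (R : ℝ) (hR : 0 < R) (μ : ℝ) (w : EuclideanSpace ℝ (Fin N) → ℝ)
    (hw1 : UpperSemicontinuousOn w (ball (0 : EuclideanSpace ℝ (Fin N)) R))
    (hw2 : ∀ x ∈ ball (0 : EuclideanSpace ℝ (Fin N)) R, w x < 0)
    (hw3 : IsViscSubsol (Pminus 1) (ball (0 : EuclideanSpace ℝ (Fin N)) R)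
      (fun _ _ => 0) μ (fun _ => 0) w) :
    μ ≤ (Real.pi/(2*R))^2 := by
  by_contra hμ
  push_neg at hμ
  have hπ := Real.pi_pos
  have hμpos : 0 < μ := lt_trans (by positivity) hμ
  have hsμ : 0 < Real.sqrt μ := Real.sqrt_pos.mpr hμpos
  set ρ : ℝ := (Real.pi/(2*Real.sqrt μ) + R)/2 with hρdef
  have hρ1 : Real.pi/(2*Real.sqrt μ) < R := by
    have h1 : Real.pi/(2*R) < Real.sqrt μ := by
      rw [show Real.pi/(2*R) = Real.sqrt ((Real.pi/(2*R))^2) by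
        rw [Real.sqrt_sq (by positivity)]]
      exact Real.sqrt_lt_sqrt (by positivity) hμ
    rw [div_lt_iff₀ (by positivity)] at h1 ⊢
    nlinarith
  have hρpos : 0 < ρ := by
    rw [hρdef]; positivity
  have hρR : ρ < R := by rw [hρdef]; linarith
  set cρ : ℝ := Real.pi/(2*ρ) with hcρdef
  have hcρpos : 0 < cρ := by rw [hcρdef]; positivity
  have hcρμ : cρ^2 < μ := by
    have h1 : Real.pi/(2*Real.sqrt μ) < ρ := by rw [hρdef]; linarith
    have h2 : cρ < Real.sqrt μ := by
      rw [hcρdef]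
      rw [div_lt_iff₀ (by positivity)]
      rw [div_lt_iff₀ (by positivity)] at h1
      nlinarith
    have := Real.sq_sqrt hμpos.le
    nlinarith [hcρpos]
  have hcρρ : cρ * ρ = Real.pi / 2 := by
    rw [hcρdef]; field_simp
  set K : Set (EuclideanSpace ℝ (Fin N)) := closedBall 0 ρ with hKdef
  have hKsub : K ⊆ ball (0 : EuclideanSpace ℝ (Fin N)) R := closedBall_subset_ball hρR
  have hKc : IsCompact K := isCompact_closedBall _ _
  have hKne : K.Nonempty := ⟨0, mem_closedBall_self hρpos.le⟩
  -- bounds for ψρ := fun y => -cos (cρ * ‖y‖) on K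
  have hψρ_le : ∀ y ∈ K, -Real.cos (cρ * ‖y‖) ≤ 0 ∧ -1 ≤ -Real.cos (cρ * ‖y‖) := by
    intro y hy
    have hyρ : ‖y‖ ≤ ρ := by
      simpa [hKdef, mem_closedBall, dist_zero_right] using hy
    have h1 : cρ * ‖y‖ ≤ Real.pi/2 := by
      rw [← hcρρ]
      exact mul_le_mul_of_nonneg_left hyρ hcρpos.le
    have h0 : 0 ≤ cρ * ‖y‖ := mul_nonneg hcρpos.le (norm_nonneg y)
    have h2 : 0 ≤ Real.cos (cρ * ‖y‖) := Real.cos_nonneg_of_mem_Icc ⟨by linarith, h1⟩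
    constructor
    · linarith
    · linarith [Real.cos_le_one (cρ * ‖y‖)]
  -- max of w on K
  obtain ⟨xm, hxmK, hxm⟩ := usc_exists_max_s19 hKc hKne (hw1.mono hKsub)
  have hm₀pos : 0 < -w xm := by linarith [hw2 xm (hKsub hxmK)]
  -- the set T
  set T : Set ℝ := {t : ℝ | 0 ≤ t ∧ ∀ y ∈ K, w y ≤ t * -Real.cos (cρ * ‖y‖)} with hTdef
  have hTne : -w xm ∈ T := by
    refine ⟨hm₀pos.le, fun y hy => ?_⟩
    have h1 := (hψρ_le y hy).2
    have h2 := hxm y hy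
    nlinarith
  have hTbdd : BddAbove T := by
    refine ⟨-w 0, fun t ht => ?_⟩
    have h1 := ht.2 0 (mem_closedBall_self hρpos.le)
    simp only [norm_zero, mul_zero, Real.cos_zero] at h1
    linarith
  set ts : ℝ := sSup T with htsdef
  have hts1 : -w xm ≤ ts := le_csSup hTbdd hTne
  have htspos : 0 < ts := lt_of_lt_of_le hm₀pos hts1
  have htsle : ∀ y ∈ K, w y ≤ ts * -Real.cos (cρ * ‖y‖) := by
    intro y hy
    rcases eq_or_lt_of_le (hψρ_le y hy).1 with heq | hlt
    · rw [heq, mul_zero]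
      exact (hw2 y (hKsub hy)).le
    · by_contra hcon
      push_neg at hcon
      have hub : ∀ t ∈ T, t ≤ w y / -Real.cos (cρ * ‖y‖) := by
        intro t ht
        rw [le_div_iff_of_neg hlt]
        exact ht.2 y hy
      have h2 : ts ≤ w y / -Real.cos (cρ * ‖y‖) := csSup_le ⟨_, hTne⟩ hub
      rw [le_div_iff_of_neg hlt] at h2
      linarith
  -- max of w - ts * ψρ on K
  have hvUSC : UpperSemicontinuousOn
      (fun y => w y + ts * Real.cos (cρ * ‖y‖)) K := by
    apply UpperSemicontinuousOn.add (hw1.mono hKsub)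
    exact ((continuous_const.mul (Real.continuous_cos.comp
      (continuous_const.mul continuous_norm))).continuousOn).upperSemicontinuousOn
  obtain ⟨xh, hxhK, hxhmax⟩ := usc_exists_max_s19 hKc hKne hvUSC
  have hxh_le : w xh + ts * Real.cos (cρ * ‖xh‖) ≤ 0 := by
    have := htsle xh hxhK
    nlinarith
  have hxh_eq : w xh + ts * Real.cos (cρ * ‖xh‖) = 0 := by
    rcases eq_or_lt_of_le hxh_le with heq | hlt
    · exact heq
    · exfalso
      set M : ℝ := w xh + ts * Real.cos (cρ * ‖xh‖) with hMdef
      have hMT : ts + -M ∈ T := by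
        refine ⟨by linarith, fun y hy => ?_⟩
        have h1 : w y + ts * Real.cos (cρ * ‖y‖) ≤ M := hxhmax y hy
        have h2 := (hψρ_le y hy).2
        nlinarith
      have := le_csSup hTbdd hMT
      linarith
  -- xh is interior
  have hxhρ : ‖xh‖ < ρ := by
    have hyρ : ‖xh‖ ≤ ρ := by
      simpa [hKdef, mem_closedBall, dist_zero_right] using hxhK
    rcases eq_or_lt_of_le hyρ with heq | hlt
    · exfalso
      have h1 : cρ * ‖xh‖ = Real.pi/2 := by rw [heq, hcρρ]
      have h2 : Real.cos (cρ * ‖xh‖) = 0 := by rw [h1, Real.cos_pi_div_two]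
      rw [h2, mul_zero, add_zero] at hxh_eq
      have := hw2 xh (hKsub hxhK)
      linarith
    · exact hlt
  have hcρxh : cρ * ‖xh‖ < Real.pi/2 := by
    rw [← hcρρ]
    exact mul_lt_mul_of_pos_left hxhρ hcρpos
  have hcosxh : 0 < Real.cos (cρ * ‖xh‖) :=
    Real.cos_pos_of_mem_Ioo ⟨by linarith [mul_nonneg hcρpos.le (norm_nonneg xh)], hcρxh⟩
  -- apply the viscosity subsolution property with test function φ
  have hxhΩ : xh ∈ ball (0 : EuclideanSpace ℝ (Fin N)) R := hKsub hxhK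
  have hmaxOn : IsLocalMaxOn
      (fun x => w x - (fun y : EuclideanSpace ℝ (Fin N) => ts * -Real.cos (cρ * ‖y‖)) x)
      (ball (0 : EuclideanSpace ℝ (Fin N)) R) xh := by
    have hballK : Metric.ball (0 : EuclideanSpace ℝ (Fin N)) ρ ∈ 𝓝 xh :=
      isOpen_ball.mem_nhds (by simpa [mem_ball, dist_zero_right] using hxhρ)
    have hballK' : Metric.ball (0 : EuclideanSpace ℝ (Fin N)) ρ ∈ 𝓝[ball (0 : EuclideanSpace ℝ (Fin N)) R] xh :=
      mem_nhdsWithin_of_mem_nhds hballK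
    refine Filter.eventually_iff_exists_mem.mpr ⟨_, hballK', fun y hy => ?_⟩
    have hyK : y ∈ K := ball_subset_closedBall hy
    have h1 := hxhmax y hyK
    simp only
    nlinarith [hxh_eq]
  have hsub := hw3 xh hxhΩ (fun y : EuclideanSpace ℝ (Fin N) => ts * -Real.cos (cρ * ‖y‖))
    ((psi_contDiff ts cρ).contDiffAt) hmaxOn
  rw [pminus_psi ts cρ htspos.le hcρpos hN xh hcρxh] at hsub
  have hwxh : w xh = ts * -Real.cos (cρ * ‖xh‖) := by linarith [hxh_eq]
  rw [hwxh] at hsub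
  simp only at hsub
  nlinarith [hsub, mul_pos htspos hcosxh, hcρμ]

end MuBound

section Main

variable {N : ℕ}

lemma ball_angle {R : ℝ} (hR : 0 < R) {x : EuclideanSpace ℝ (Fin N)}
    (hx : x ∈ ball (0 : EuclideanSpace ℝ (Fin N)) R) :
    Real.pi/(2*R) * ‖x‖ < Real.pi/2 := by
  have hπ := Real.pi_pos
  rw [mem_ball, dist_zero_right] at hx
  rw [div_mul_eq_mul_div, div_lt_div_iff₀ (by positivity) (by positivity)]
  nlinarith [norm_nonneg x]

lemma psi_subsol_ineq (hN : 1 ≤ N) {R : ℝ} (hR : 0 < R)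
    (x₀ : EuclideanSpace ℝ (Fin N)) (hx₀ : x₀ ∈ ball (0 : EuclideanSpace ℝ (Fin N)) R)
    (φ : EuclideanSpace ℝ (Fin N) → ℝ) (hφ : ContDiffAt ℝ 2 φ x₀)
    (hmax : IsLocalMaxOn
      (fun x => (fun y : EuclideanSpace ℝ (Fin N) => 1 * -Real.cos (Real.pi/(2*R) * ‖y‖)) x - φ x)
      (ball (0 : EuclideanSpace ℝ (Fin N)) R) x₀) :
    1 * ((Real.pi/(2*R))^2 * Real.cos (Real.pi/(2*R) * ‖x₀‖)) ≤ Pminus 1 φ x₀ := by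
  have hπ := Real.pi_pos
  have hc : 0 < Real.pi/(2*R) := by positivity
  have hmax' : IsLocalMax
      (fun x => (fun y : EuclideanSpace ℝ (Fin N) => 1 * -Real.cos (Real.pi/(2*R) * ‖y‖)) x - φ x) x₀ :=
    hmax.isLocalMax (isOpen_ball.mem_nhds hx₀)
  refine pminus_ge_of_quad hN φ x₀ _ (fun ξ hξ => ?_)
  have h1 := quadform_ge 1 (Real.pi/(2*R)) zero_le_one hc x₀ ξ (ball_angle hR hx₀) hξ
  have h2 := quad_le_of_isLocalMax hφ ((psi_contDiff 1 (Real.pi/(2*R))).contDiffAt) hmax' ξ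
  exact le_trans h1 h2

end Main

/-- explicit principal eigenvalue and eigenfunction of `𝒫⁻₁` (with
`H ≡ 0`) in the ball `B_R(0)`: `ψ₁(x) = -cos(π|x|/(2R))` is a `C²` negative
eigenfunction and `μ₁⁻(B_R(0)) = (π/(2R))²`. -/
theorem statement19 {N : ℕ} (hN : 2 ≤ N) (R : ℝ) (hR : 0 < R) :
    (ContDiffOn ℝ 2
        (fun x : EuclideanSpace ℝ (Fin N) => -Real.cos (Real.pi * ‖x‖ / (2 * R)))
        (closedBall (0 : EuclideanSpace ℝ (Fin N)) R) ∧
      (∀ x ∈ ball (0 : EuclideanSpace ℝ (Fin N)) R,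
        -Real.cos (Real.pi * ‖x‖ / (2 * R)) < 0) ∧
      (∀ x ∈ sphere (0 : EuclideanSpace ℝ (Fin N)) R,
        -Real.cos (Real.pi * ‖x‖ / (2 * R)) = 0) ∧
      (∀ x ∈ ball (0 : EuclideanSpace ℝ (Fin N)) R,
        Pminus 1 (fun y : EuclideanSpace ℝ (Fin N) =>
            -Real.cos (Real.pi * ‖y‖ / (2 * R))) x
          + (Real.pi / (2 * R)) ^ 2 * (-Real.cos (Real.pi * ‖x‖ / (2 * R))) = 0)) ∧
    muMinus 1 (ball (0 : EuclideanSpace ℝ (Fin N)) R) (fun _ _ => 0) =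
      (((Real.pi / (2 * R)) ^ 2 : ℝ) : EReal) := by
  have hπ := Real.pi_pos
  have hN1 : 1 ≤ N := by omega
  have hc : 0 < Real.pi/(2*R) := by positivity
  have hfeq : (fun x : EuclideanSpace ℝ (Fin N) => -Real.cos (Real.pi * ‖x‖ / (2*R)))
      = fun x : EuclideanSpace ℝ (Fin N) => 1 * -Real.cos (Real.pi/(2*R) * ‖x‖) := by
    funext x
    rw [show Real.pi * ‖x‖ / (2*R) = Real.pi/(2*R) * ‖x‖ from by ring, one_mul]
  constructor
  · refine ⟨?_, ?_, ?_, ?_⟩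
    · rw [hfeq]
      exact (psi_contDiff 1 (Real.pi/(2*R))).contDiffOn
    · intro x hx
      rw [show Real.pi * ‖x‖ / (2*R) = Real.pi/(2*R) * ‖x‖ from by ring]
      have h1 : 0 < Real.cos (Real.pi/(2*R) * ‖x‖) := Real.cos_pos_of_mem_Ioo
        ⟨by linarith [mul_nonneg hc.le (norm_nonneg x)], ball_angle hR hx⟩
      linarith
    · intro x hx
      have hnorm : ‖x‖ = R := by rwa [mem_sphere_zero_iff_norm] at hx
      have harg : Real.pi * ‖x‖ / (2*R) = Real.pi/2 := by
        rw [hnorm]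
        field_simp
      rw [harg, Real.cos_pi_div_two, neg_zero]
    · intro x hx
      have h1 : Pminus 1 (fun y : EuclideanSpace ℝ (Fin N) => -Real.cos (Real.pi * ‖y‖ / (2*R))) x
          = 1*((Real.pi/(2*R))^2 * Real.cos (Real.pi/(2*R)*‖x‖)) := by
        rw [hfeq]
        exact pminus_psi 1 _ zero_le_one hc hN1 x (ball_angle hR hx)
      rw [h1, show Real.pi * ‖x‖ / (2*R) = Real.pi/(2*R) * ‖x‖ from by ring]
      ring
  · have hπ := Real.pi_pos
    have hN1 : 1 ≤ N := by omega
    have hc : 0 < Real.pi/(2*R) := by positivity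
    apply le_antisymm
    · apply sSup_le
      rintro m ⟨μ, rfl, w, hw1, hw2, hw3⟩
      have := mu_le hN1 R hR μ w hw1 hw2 hw3
      exact_mod_cast EReal.coe_le_coe_iff.mpr this
    · apply le_sSup
      refine ⟨(Real.pi/(2*R))^2, by norm_num, fun y => 1 * -Real.cos (Real.pi/(2*R) * ‖y‖),
        ?_, ?_, ?_⟩
      · exact ((psi_contDiff 1 (Real.pi/(2*R))).continuous.continuousOn).upperSemicontinuousOn
      · intro x hx
        have h1 : 0 < Real.cos (Real.pi/(2*R) * ‖x‖) := Real.cos_pos_of_mem_Ioo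
          ⟨by linarith [mul_nonneg hc.le (norm_nonneg x)], ball_angle hR hx⟩
        nlinarith
      · intro x₀ hx₀ φ hφ hmax
        have hge := psi_subsol_ineq hN1 hR x₀ hx₀ φ hφ hmax
        show (0:ℝ) ≤ Pminus 1 φ x₀ + 0 + (Real.pi/(2*R))^2 * (1 * -Real.cos (Real.pi/(2*R) * ‖x₀‖))
        nlinarith [hge]
end
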